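/- arXiv:1208.6173 — 4 statements merged into one kernel-verified Lean document; each statement's English description precedes it below -/
import Mathlib

section
/- Let h ≥ 0, let π be a permutation of {1,…,h}, and let β be the join of the join-congruences cg(1,π(1)), …, cg(h,π(h)) of the grid K_{h,h}. On the quotient set Q = K_{h,h}/β, the relation [a] ≤ [b] ⟺ (a ⊔ b, b) ∈ β is a well-defined partial order under which Q is a lattice, and this lattice is distributive if and only if π contains no 321 pattern, i.e., there are no indices i < j < k in {1,…,h} with π(i) > π(j) > π(k). -/
/-- The grid `K_{m,n}`: the lattice `{0,…,m} × {0,…,n}` ordered componentwise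
(join and meet are componentwise max and min). -/
abbrev Grid (m n : ℕ) := Fin (m + 1) × Fin (n + 1)

/-- A join-congruence of a join-semilattice: an equivalence relation compatible with
joining a fixed element. -/
def IsJoinCong {α : Type*} [SemilatticeSup α] (r : α → α → Prop) : Prop :=
  Equivalence r ∧ ∀ a b c : α, r a b → r (a ⊔ c) (b ⊔ c)

/-- The join-congruence generated by a relation `R`: the smallest join-congruence
containing `R` (the intersection of all join-congruences containing `R`). -/
def joinCongGen {α : Type*} [SemilatticeSup α] (R : α → α → Prop) : α → α → Prop :=
  fun a b => ∀ r : α → α → Prop, IsJoinCong r → (∀ x y, R x y → r x y) → r a b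

/-- The join of a family of join-congruences: the smallest join-congruence containing
all members of the family. -/
def joinCongSup {α : Type*} [SemilatticeSup α] {ι : Sort*} (f : ι → α → α → Prop) :
    α → α → Prop :=
  joinCongGen fun a b => ∃ i, f i a b

open Fin.NatCast in
/-- For `1 ≤ i ≤ m` and `1 ≤ j ≤ n`, the join-congruence `cg(i,j)` of the grid `K_{m,n}`
generated by the pairs `((i,j−1),(i,j))` and `((i−1,j),(i,j))`. -/
def cg (m n i j : ℕ) : Grid m n → Grid m n → Prop :=
  joinCongGen fun a b =>
    b = ((i : Fin (m + 1)), (j : Fin (n + 1))) ∧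
      (a = ((i : Fin (m + 1)), ((j - 1 : ℕ) : Fin (n + 1))) ∨
        a = (((i - 1 : ℕ) : Fin (m + 1)), (j : Fin (n + 1))))

namespace GridCong

variable {h : ℕ}

/-- closed elements -/
def inC (π : Equiv.Perm (Fin h)) (p : Grid h h) : Prop :=
  (∀ s : Fin h, s.val = p.1.val → p.2.val ≤ (π s).val) ∧
  (∀ s : Fin h, (π s).val = p.2.val → p.1.val ≤ s.val)

lemma val_inf (a b : Fin (h+1)) : (a ⊓ b).val = min a.val b.val := rfl
lemma val_sup (a b : Fin (h+1)) : (a ⊔ b).val = max a.val b.val := rfl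
lemma fst_inf (p q : Grid h h) : (p ⊓ q).1 = p.1 ⊓ q.1 := rfl
lemma snd_inf (p q : Grid h h) : (p ⊓ q).2 = p.2 ⊓ q.2 := rfl
lemma fst_sup (p q : Grid h h) : (p ⊔ q).1 = p.1 ⊔ q.1 := rfl
lemma snd_sup (p q : Grid h h) : (p ⊔ q).2 = p.2 ⊔ q.2 := rfl

lemma grid_le_iff (p q : Grid h h) : p ≤ q ↔ p.1.val ≤ q.1.val ∧ p.2.val ≤ q.2.val := by
  rw [Prod.le_def, Fin.le_def, Fin.le_def]

lemma grid_eq_iff (p q : Grid h h) : p = q ↔ p.1.val = q.1.val ∧ p.2.val = q.2.val := by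
  rw [Prod.ext_iff, Fin.ext_iff, Fin.ext_iff]

lemma inC_top (π : Equiv.Perm (Fin h)) : inC π ⊤ := by
  constructor
  · intro s hs
    have := s.isLt
    have : (⊤ : Grid h h).1.val = h := rfl
    omega
  · intro s hs
    have := (π s).isLt
    have : (⊤ : Grid h h).2.val = h := rfl
    omega

lemma inC_inf (π : Equiv.Perm (Fin h)) {p q : Grid h h} (hp : inC π p) (hq : inC π q) :
    inC π (p ⊓ q) := by
  obtain ⟨p1, p2⟩ := hp
  obtain ⟨q1, q2⟩ := hq
  constructor
  · intro s hs
    rw [fst_inf, val_inf] at hs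
    rw [snd_inf, val_inf]
    rcases Nat.min_eq_left (a := p.1.val) (b := q.1.val) , Nat.min_eq_right (a := p.1.val) (b := q.1.val) with _
    rcases Nat.le_total p.1.val q.1.val with hle | hle
    · have := p1 s (by omega)
      omega
    · have := q1 s (by omega)
      omega
  · intro s hs
    rw [snd_inf, val_inf] at hs
    rw [fst_inf, val_inf]
    rcases Nat.le_total p.2.val q.2.val with hle | hle
    · have := p2 s (by omega)
      omega
    · have := q2 s (by omega)
      omega

noncomputable instance : DecidablePred (inC (h := h) π) := Classical.decPred _

/-- closure: least closed element above -/
noncomputable def nu (π : Equiv.Perm (Fin h)) (p : Grid h h) : Grid h h :=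
  (Finset.univ.filter (fun c => inC π c ∧ p ≤ c)).inf id

lemma le_nu (π : Equiv.Perm (Fin h)) (p : Grid h h) : p ≤ nu π p := by
  apply Finset.le_inf
  intro c hc
  simp only [Finset.mem_filter] at hc
  exact hc.2.2

lemma nu_le (π : Equiv.Perm (Fin h)) {p c : Grid h h} (hc : inC π c) (hpc : p ≤ c) :
    nu π p ≤ c := by
  have : c ∈ Finset.univ.filter (fun c => inC π c ∧ p ≤ c) := by simp [hc, hpc]
  exact Finset.inf_le this

lemma inC_nu (π : Equiv.Perm (Fin h)) (p : Grid h h) : inC π (nu π p) := by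
  rw [nu]
  generalize hs : (Finset.univ.filter (fun c => inC π c ∧ p ≤ c)) = s
  have hmem : ∀ c ∈ s, inC π c := by
    intro c hc; rw [← hs] at hc; simp only [Finset.mem_filter] at hc; exact hc.2.1
  clear hs
  induction s using Finset.cons_induction with
  | empty => simpa using inC_top π
  | cons a s ha ih =>
    rw [Finset.inf_cons]
    exact inC_inf π (hmem a (Finset.mem_cons_self a s))
      (ih fun c hc => hmem c (Finset.mem_cons_of_mem hc))

lemma nu_mono (π : Equiv.Perm (Fin h)) {p q : Grid h h} (hpq : p ≤ q) : nu π p ≤ nu π q :=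
  nu_le π (inC_nu π q) (le_trans hpq (le_nu π q))

lemma nu_eq_self (π : Equiv.Perm (Fin h)) {p : Grid h h} (hp : inC π p) : nu π p = p :=
  le_antisymm (nu_le π hp le_rfl) (le_nu π p)

lemma nu_nu (π : Equiv.Perm (Fin h)) (p : Grid h h) : nu π (nu π p) = nu π p :=
  nu_eq_self π (inC_nu π p)

lemma nu_sup_left (π : Equiv.Perm (Fin h)) (p q : Grid h h) :
    nu π (nu π p ⊔ q) = nu π (p ⊔ q) := by
  apply le_antisymm
  · apply nu_le π (inC_nu π _)
    apply sup_le
    · exact nu_le π (inC_nu π _) (le_trans le_sup_left (le_nu π _))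
    · exact le_trans le_sup_right (le_nu π _)
  · exact nu_mono π (sup_le_sup_right (le_nu π p) q)

lemma nu_sup_right (π : Equiv.Perm (Fin h)) (p q : Grid h h) :
    nu π (p ⊔ nu π q) = nu π (p ⊔ q) := by
  rw [sup_comm, nu_sup_left, sup_comm]

lemma isJoinCong_joinCongGen {α : Type*} [SemilatticeSup α] (R : α → α → Prop) :
    IsJoinCong (joinCongGen R) := by
  constructor
  · constructor
    · intro a r hr _; exact hr.1.refl a
    · intro a b H r hr hR; exact hr.1.symm (H r hr hR)
    · intro a b c H1 H2 r hr hR; exact hr.1.trans (H1 r hr hR) (H2 r hr hR)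
  · intro a b c H r hr hR; exact hr.2 a b c (H r hr hR)

lemma joinCongGen_of {α : Type*} [SemilatticeSup α] {R : α → α → Prop} {a b : α}
    (hab : R a b) : joinCongGen R a b := fun _ _ hR => hR a b hab

lemma joinCongGen_le {α : Type*} [SemilatticeSup α] {R r : α → α → Prop}
    (hr : IsJoinCong r) (hR : ∀ x y, R x y → r x y) {a b : α} (H : joinCongGen R a b) :
    r a b := H r hr hR

/-- the congruence in the theorem -/
def bet (π : Equiv.Perm (Fin h)) : Grid h h → Grid h h → Prop :=
  joinCongSup fun s : Fin h => cg h h (s.val + 1) ((π s).val + 1)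

lemma isJoinCong_bet (π : Equiv.Perm (Fin h)) : IsJoinCong (bet π) :=
  isJoinCong_joinCongGen _

lemma equivalence_bet (π : Equiv.Perm (Fin h)) : Equivalence (bet π) :=
  (isJoinCong_bet π).1

open Fin.NatCast in
def pt (x y : ℕ) : Grid h h := ((x : Fin (h+1)), (y : Fin (h+1)))

lemma pt_fst (x y : ℕ) (hx : x < h + 1) : (pt (h := h) x y).1.val = x :=
  Fin.val_cast_of_lt hx

lemma pt_snd (x y : ℕ) (hy : y < h + 1) : (pt (h := h) x y).2.val = y :=
  Fin.val_cast_of_lt hy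

lemma nu_gen_a (π : Equiv.Perm (Fin h)) (s : Fin h) :
    nu π (pt (s.val+1) ((π s).val)) = nu π (pt (s.val+1) ((π s).val+1)) := by
  have hs := s.isLt
  have hπs := (π s).isLt
  apply le_antisymm
  · apply nu_mono
    rw [grid_le_iff, pt_fst _ _ (by omega), pt_fst _ _ (by omega),
      pt_snd _ _ (by omega), pt_snd _ _ (by omega)]
    omega
  · apply nu_le π (inC_nu π _)
    have h1 := le_nu π (pt (h := h) (s.val+1) ((π s).val))
    rw [grid_le_iff, pt_fst _ _ (by omega), pt_snd _ _ (by omega)] at h1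
    rw [grid_le_iff, pt_fst _ _ (by omega), pt_snd _ _ (by omega)]
    refine ⟨h1.1, ?_⟩
    by_contra hcon
    have h2 : (nu π (pt (h := h) (s.val+1) ((π s).val))).2.val = (π s).val := by omega
    have := (inC_nu π (pt (h := h) (s.val+1) ((π s).val))).2 s h2.symm
    omega

lemma nu_gen_b (π : Equiv.Perm (Fin h)) (s : Fin h) :
    nu π (pt (s.val) ((π s).val+1)) = nu π (pt (s.val+1) ((π s).val+1)) := by
  have hs := s.isLt
  have hπs := (π s).isLt
  apply le_antisymm
  · apply nu_mono
    rw [grid_le_iff, pt_fst _ _ (by omega), pt_fst _ _ (by omega),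
      pt_snd _ _ (by omega), pt_snd _ _ (by omega)]
    omega
  · apply nu_le π (inC_nu π _)
    have h1 := le_nu π (pt (h := h) (s.val) ((π s).val+1))
    rw [grid_le_iff, pt_fst _ _ (by omega), pt_snd _ _ (by omega)] at h1
    rw [grid_le_iff, pt_fst _ _ (by omega), pt_snd _ _ (by omega)]
    refine ⟨?_, h1.2⟩
    by_contra hcon
    have h2 : s.val = (nu π (pt (h := h) (s.val) ((π s).val+1))).1.val := by omega
    have := (inC_nu π (pt (h := h) (s.val) ((π s).val+1))).1 s h2
    omega

lemma bet_to_nu (π : Equiv.Perm (Fin h)) {a b : Grid h h} (H : bet π a b) :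
    nu π a = nu π b := by
  have hr : IsJoinCong (fun a b : Grid h h => nu π a = nu π b) := by
    refine ⟨⟨fun _ => rfl, Eq.symm, Eq.trans⟩, ?_⟩
    intro a b c hab
    rw [← nu_sup_left π a c, hab, nu_sup_left]
  refine joinCongGen_le hr ?_ H
  rintro x y ⟨s, hcg⟩
  refine joinCongGen_le hr ?_ hcg
  rintro u v ⟨rfl, hu | hu⟩ <;> subst hu <;>
    simp only [Nat.add_sub_cancel]
  · exact nu_gen_a π s
  · exact nu_gen_b π s

lemma bet_gen_a (π : Equiv.Perm (Fin h)) (s : Fin h) :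
    bet π (pt (s.val+1) ((π s).val)) (pt (s.val+1) ((π s).val+1)) := by
  apply joinCongGen_of
  refine ⟨s, joinCongGen_of ⟨rfl, Or.inl ?_⟩⟩
  simp only [Nat.add_sub_cancel]
  rfl

lemma bet_gen_b (π : Equiv.Perm (Fin h)) (s : Fin h) :
    bet π (pt (s.val) ((π s).val+1)) (pt (s.val+1) ((π s).val+1)) := by
  apply joinCongGen_of
  refine ⟨s, joinCongGen_of ⟨rfl, Or.inr ?_⟩⟩
  simp only [Nat.add_sub_cancel]
  rfl

lemma bet_ystep (π : Equiv.Perm (Fin h)) {x y : Fin (h+1)} (hy : y.val < h)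
    (hstep : (π.symm ⟨y.val, hy⟩).val < x.val) :
    bet π (x, y) (x, ⟨y.val+1, Nat.succ_lt_succ hy⟩) := by
  set s := π.symm ⟨y.val, hy⟩ with hsdef
  have hπs : (π s).val = y.val := by rw [hsdef, Equiv.apply_symm_apply]
  have hs := s.isLt
  have H := (isJoinCong_bet π).2 _ _ (x, y) (bet_gen_a π s)
  have r1 : ((x, y) : Grid h h).1.val = x.val := rfl
  have r2 : ((x, y) : Grid h h).2.val = y.val := rfl
  have r3 : ((x, (⟨y.val+1, Nat.succ_lt_succ hy⟩ : Fin (h+1))) : Grid h h).1.val = x.val := rfl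
  have r4 : ((x, (⟨y.val+1, Nat.succ_lt_succ hy⟩ : Fin (h+1))) : Grid h h).2.val
      = y.val + 1 := rfl
  have e1 : pt (h := h) (s.val+1) ((π s).val) ⊔ (x, y) = (x, y) := by
    rw [grid_eq_iff, fst_sup, snd_sup, val_sup, val_sup,
      pt_fst _ _ (by omega), pt_snd _ _ (by omega)]
    omega
  have e2 : pt (h := h) (s.val+1) ((π s).val+1) ⊔ (x, y) =
      (x, (⟨y.val+1, Nat.succ_lt_succ hy⟩ : Fin (h+1))) := by
    rw [grid_eq_iff, fst_sup, snd_sup, val_sup, val_sup,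
      pt_fst _ _ (by omega), pt_snd _ _ (by omega)]
    omega
  rwa [e1, e2] at H

lemma bet_xstep (π : Equiv.Perm (Fin h)) {x y : Fin (h+1)} (hx : x.val < h)
    (hstep : (π ⟨x.val, hx⟩).val < y.val) :
    bet π (x, y) (⟨x.val+1, Nat.succ_lt_succ hx⟩, y) := by
  set s : Fin h := ⟨x.val, hx⟩ with hsdef
  have hs := s.isLt
  have hπs := (π s).isLt
  have hsv : s.val = x.val := rfl
  have H := (isJoinCong_bet π).2 _ _ (x, y) (bet_gen_b π s)
  have r1 : ((x, y) : Grid h h).1.val = x.val := rfl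
  have r2 : ((x, y) : Grid h h).2.val = y.val := rfl
  have r3 : (((⟨x.val+1, Nat.succ_lt_succ hx⟩ : Fin (h+1)), y) : Grid h h).1.val
      = x.val + 1 := rfl
  have r4 : (((⟨x.val+1, Nat.succ_lt_succ hx⟩ : Fin (h+1)), y) : Grid h h).2.val
      = y.val := rfl
  have e1 : pt (h := h) (s.val) ((π s).val+1) ⊔ (x, y) = (x, y) := by
    rw [grid_eq_iff, fst_sup, snd_sup, val_sup, val_sup,
      pt_fst _ _ (by omega), pt_snd _ _ (by omega)]
    omega
  have e2 : pt (h := h) (s.val+1) ((π s).val+1) ⊔ (x, y) =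
      ((⟨x.val+1, Nat.succ_lt_succ hx⟩ : Fin (h+1)), y) := by
    rw [grid_eq_iff, fst_sup, snd_sup, val_sup, val_sup,
      pt_fst _ _ (by omega), pt_snd _ _ (by omega)]
    omega
  rwa [e1, e2] at H

lemma nu_ystep_le (π : Equiv.Perm (Fin h)) {x y : Fin (h+1)} (hy : y.val < h)
    (hstep : (π.symm ⟨y.val, hy⟩).val < x.val) :
    ((x, (⟨y.val+1, Nat.succ_lt_succ hy⟩ : Fin (h+1))) : Grid h h) ≤ nu π (x, y) := by
  have h1 := le_nu π ((x, y) : Grid h h)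
  rw [grid_le_iff] at h1 ⊢
  have r1 : ((x, y) : Grid h h).1.val = x.val := rfl
  have r2 : ((x, y) : Grid h h).2.val = y.val := rfl
  have r3 : ((x, (⟨y.val+1, Nat.succ_lt_succ hy⟩ : Fin (h+1))) : Grid h h).1.val = x.val := rfl
  have r4 : ((x, (⟨y.val+1, Nat.succ_lt_succ hy⟩ : Fin (h+1))) : Grid h h).2.val
      = y.val + 1 := rfl
  have r5 : ((⟨y.val, hy⟩ : Fin h)).val = y.val := rfl
  refine ⟨by omega, ?_⟩
  by_contra hcon
  have h2 : (π (π.symm ⟨y.val, hy⟩)).val = (nu π ((x, y) : Grid h h)).2.val := by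
    rw [Equiv.apply_symm_apply]; omega
  have h3 := (inC_nu π ((x, y) : Grid h h)).2 _ h2
  omega

lemma nu_xstep_le (π : Equiv.Perm (Fin h)) {x y : Fin (h+1)} (hx : x.val < h)
    (hstep : (π ⟨x.val, hx⟩).val < y.val) :
    (((⟨x.val+1, Nat.succ_lt_succ hx⟩ : Fin (h+1)), y) : Grid h h) ≤ nu π (x, y) := by
  have h1 := le_nu π ((x, y) : Grid h h)
  rw [grid_le_iff] at h1 ⊢
  have r1 : ((x, y) : Grid h h).1.val = x.val := rfl
  have r2 : ((x, y) : Grid h h).2.val = y.val := rfl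
  have r3 : (((⟨x.val+1, Nat.succ_lt_succ hx⟩ : Fin (h+1)), y) : Grid h h).1.val
      = x.val + 1 := rfl
  have r4 : (((⟨x.val+1, Nat.succ_lt_succ hx⟩ : Fin (h+1)), y) : Grid h h).2.val
      = y.val := rfl
  have r5 : ((⟨x.val, hx⟩ : Fin h)).val = x.val := rfl
  refine ⟨?_, by omega⟩
  by_contra hcon
  have h2 : (⟨x.val, hx⟩ : Fin h).val = (nu π ((x, y) : Grid h h)).1.val := by omega
  have h3 := (inC_nu π ((x, y) : Grid h h)).1 _ h2
  omega

lemma bet_nu (π : Equiv.Perm (Fin h)) (a : Grid h h) : bet π a (nu π a) := by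
  suffices H : ∀ n (a : Grid h h), 2*h - a.1.val - a.2.val ≤ n → bet π a (nu π a) from
    H _ a le_rfl
  intro n
  induction n with
  | zero =>
    intro a ha
    have h1 := a.1.isLt
    have h2 := a.2.isLt
    have hC : inC π a := by
      constructor
      · intro s hs; have := s.isLt; omega
      · intro s hs; have := (π s).isLt; omega
    rw [nu_eq_self π hC]
    exact (equivalence_bet π).refl a
  | succ n ih =>
    intro a ha
    by_cases hC : inC π a
    · rw [nu_eq_self π hC]
      exact (equivalence_bet π).refl a
    · rw [inC, not_and_or] at hC
      rcases hC with hC | hC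
      · push_neg at hC
        obtain ⟨s, hs, hlt⟩ := hC
        have hx : a.1.val < h := hs ▸ s.isLt
        have hstep : (π ⟨a.1.val, hx⟩).val < a.2.val := by
          have : (⟨a.1.val, hx⟩ : Fin h) = s := Fin.ext hs.symm
          rw [this]; exact hlt
        set a' : Grid h h := (⟨a.1.val+1, Nat.succ_lt_succ hx⟩, a.2) with ha'
        have hb1 : bet π (a.1, a.2) a' := bet_xstep π hx hstep
        have hle : a' ≤ nu π (a.1, a.2) := nu_xstep_le π hx hstep
        have r3 : a'.1.val = a.1.val + 1 := by rw [ha']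
        have r4 : a'.2.val = a.2.val := by rw [ha']
        have haa' : a ≤ a' := by rw [grid_le_iff]; omega
        have hnu : nu π a' = nu π a := by
          apply le_antisymm
          · exact nu_le π (inC_nu π a) hle
          · exact nu_mono π haa'
        have ih' := ih a' (by omega)
        rw [hnu] at ih'
        exact (equivalence_bet π).trans hb1 ih'
      · push_neg at hC
        obtain ⟨s, hs, hlt⟩ := hC
        have hy : a.2.val < h := hs ▸ (π s).isLt
        have hstep : (π.symm ⟨a.2.val, hy⟩).val < a.1.val := by
          have : (⟨a.2.val, hy⟩ : Fin h) = π s := Fin.ext hs.symm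
          rw [this, Equiv.symm_apply_apply]; exact hlt
        set a' : Grid h h := (a.1, ⟨a.2.val+1, Nat.succ_lt_succ hy⟩) with ha'
        have hb1 : bet π (a.1, a.2) a' := bet_ystep π hy hstep
        have hle : a' ≤ nu π (a.1, a.2) := nu_ystep_le π hy hstep
        have r3 : a'.1.val = a.1.val := by rw [ha']
        have r4 : a'.2.val = a.2.val + 1 := by rw [ha']
        have haa' : a ≤ a' := by rw [grid_le_iff]; omega
        have hnu : nu π a' = nu π a := by
          apply le_antisymm
          · exact nu_le π (inC_nu π a) hle
          · exact nu_mono π haa'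
        have ih' := ih a' (by omega)
        rw [hnu] at ih'
        exact (equivalence_bet π).trans hb1 ih'

lemma bet_iff_nu (π : Equiv.Perm (Fin h)) (a b : Grid h h) :
    bet π a b ↔ nu π a = nu π b := by
  constructor
  · exact bet_to_nu π
  · intro H
    refine (equivalence_bet π).trans (bet_nu π a) ?_
    rw [H]
    exact (equivalence_bet π).symm (bet_nu π b)

def No321 (π : Equiv.Perm (Fin h)) : Prop :=
  ¬ ∃ i j k : Fin h, i < j ∧ j < k ∧ π k < π j ∧ π j < π i

lemma no321_symm {π : Equiv.Perm (Fin h)} (hno : No321 π) : No321 π.symm := by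
  rintro ⟨i, j, k, hij, hjk, h1, h2⟩
  exact hno ⟨π.symm k, π.symm j, π.symm i, h1, h2, by
    rw [Equiv.apply_symm_apply, Equiv.apply_symm_apply]; exact hij, by
    rw [Equiv.apply_symm_apply, Equiv.apply_symm_apply]; exact hjk⟩

/-- coordinate swap -/
def sw (p : Grid h h) : Grid h h := (p.2, p.1)

lemma sw_le_sw {p q : Grid h h} : sw p ≤ sw q ↔ p ≤ q := by
  rw [grid_le_iff, grid_le_iff]
  exact and_comm

lemma sw_inf (p q : Grid h h) : sw (p ⊓ q) = sw p ⊓ sw q := rfl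

lemma sw_sup (p q : Grid h h) : sw (p ⊔ q) = sw p ⊔ sw q := rfl

lemma sw_sw (p : Grid h h) : sw (sw p) = p := rfl

lemma inC_sw (π : Equiv.Perm (Fin h)) (p : Grid h h) : inC π.symm (sw p) ↔ inC π p := by
  constructor
  · rintro ⟨c1, c2⟩
    constructor
    · intro s hs
      have := c2 (π s) (by rw [Equiv.symm_apply_apply]; exact hs)
      exact this
    · intro s hs
      have := c1 (π s) hs
      rwa [Equiv.symm_apply_apply] at this
  · rintro ⟨c1, c2⟩
    constructor
    · intro s hs
      exact c2 (π.symm s) (by rw [Equiv.apply_symm_apply]; exact hs)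
    · intro s hs
      have := c1 (π.symm s) hs
      rwa [Equiv.apply_symm_apply] at this

lemma nu_sw (π : Equiv.Perm (Fin h)) (p : Grid h h) :
    nu π.symm (sw p) = sw (nu π p) := by
  apply le_antisymm
  · apply nu_le π.symm
    · rw [inC_sw]; exact inC_nu π p
    · rw [sw_le_sw]; exact le_nu π p
  · rw [← sw_sw (nu π.symm (sw p)), sw_le_sw]
    apply nu_le π
    · have := (inC_sw π.symm (nu π.symm (sw p))).mpr (inC_nu π.symm (sw p))
      rwa [Equiv.symm_symm] at this
    · rw [← sw_sw p, sw_le_sw]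
      exact le_nu π.symm (sw p)

lemma kl_ystep (π : Equiv.Perm (Fin h)) (hno : No321 π) {A B C W : Grid h h}
    (hA : inC π A) (hB : inC π B) (hC : inC π C) (hm : B ⊔ C ≤ W) (hW : W ≤ nu π (B ⊔ C))
    (hv : W.2.val < h) (hstep : (π.symm ⟨W.2.val, hv⟩).val < W.1.val) :
    A ⊓ (W.1, (⟨W.2.val + 1, Nat.succ_lt_succ hv⟩ : Fin (h+1))) ≤ nu π (A ⊓ W) := by
  have hi0h : (π.symm ⟨W.2.val, hv⟩).val < h := (π.symm ⟨W.2.val, hv⟩).isLt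
  set i0 := (π.symm ⟨W.2.val, hv⟩).val with hi0
  have rv : ((⟨W.2.val, hv⟩ : Fin h)).val = W.2.val := rfl
  have hAW1 : (A ⊓ W).1.val = min A.1.val W.1.val := rfl
  have hAW2 : (A ⊓ W).2.val = min A.2.val W.2.val := rfl
  have hNle := le_nu π (A ⊓ W)
  rw [grid_le_iff] at hNle
  rw [grid_le_iff]
  have g1 : (A ⊓ ((W.1, (⟨W.2.val + 1, Nat.succ_lt_succ hv⟩ : Fin (h+1))) : Grid h h)).1.val
      = min A.1.val W.1.val := rfl
  have g2 : (A ⊓ ((W.1, (⟨W.2.val + 1, Nat.succ_lt_succ hv⟩ : Fin (h+1))) : Grid h h)).2.val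
      = min A.2.val (W.2.val + 1) := rfl
  refine ⟨by omega, ?_⟩
  by_cases hy : A.2.val ≤ W.2.val
  · omega
  · push_neg at hy
    by_cases hcase : i0 < min A.1.val W.1.val
    · by_contra hcon
      have hs2 : (π (π.symm ⟨W.2.val, hv⟩)).val = (nu π (A ⊓ W)).2.val := by
        rw [Equiv.apply_symm_apply]
        omega
      have h3 := (inC_nu π (A ⊓ W)).2 _ hs2
      omega
    · exfalso
      push_neg at hcase
      have hi0u : i0 < W.1.val := hstep
      have hxu : A.1.val ≤ i0 := by omega
      have hx : A.1.val < h := by omega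
      have rx : ((⟨A.1.val, hx⟩ : Fin h)).val = A.1.val := rfl
      have hπx : A.2.val ≤ (π ⟨A.1.val, hx⟩).val := hA.1 ⟨A.1.val, hx⟩ rfl
      have hxi0 : A.1.val < i0 := by
        rcases Nat.lt_or_ge A.1.val i0 with hlt | hge
        · exact hlt
        · exfalso
          have hxe : (⟨A.1.val, hx⟩ : Fin h) = π.symm ⟨W.2.val, hv⟩ := Fin.ext (by omega)
          rw [hxe, Equiv.apply_symm_apply] at hπx
          omega
      have sub : ∀ D : Grid h h, inC π D → D.2.val ≤ W.2.val → i0 < D.1.val → False := by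
        intro D hD hDv hDi
        have hDvh : D.2.val < h := by omega
        have rD : ((⟨D.2.val, hDvh⟩ : Fin h)).val = D.2.val := rfl
        have ht := hD.2 (π.symm ⟨D.2.val, hDvh⟩)
          (by rw [Equiv.apply_symm_apply])
        by_cases htv : D.2.val = W.2.val
        · have he : (⟨D.2.val, hDvh⟩ : Fin h) = ⟨W.2.val, hv⟩ := Fin.ext htv
          rw [he] at ht
          omega
        · apply hno
          refine ⟨⟨A.1.val, hx⟩, π.symm ⟨W.2.val, hv⟩, π.symm ⟨D.2.val, hDvh⟩, ?_, ?_, ?_, ?_⟩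
          · rw [Fin.lt_def]
            have : (⟨A.1.val, hx⟩ : Fin h).val = A.1.val := rfl
            omega
          · rw [Fin.lt_def]
            omega
          · rw [Fin.lt_def, Equiv.apply_symm_apply, Equiv.apply_symm_apply]
            have r1 : (⟨D.2.val, hDvh⟩ : Fin h).val = D.2.val := rfl
            have r2 : (⟨W.2.val, hv⟩ : Fin h).val = W.2.val := rfl
            omega
          · rw [Fin.lt_def, Equiv.apply_symm_apply]
            have r2 : (⟨W.2.val, hv⟩ : Fin h).val = W.2.val := rfl
            omega
      have hmW := hm
      rw [grid_le_iff] at hmW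
      have hm1 : (B ⊔ C).1.val = max B.1.val C.1.val := rfl
      have hm2 : (B ⊔ C).2.val = max B.2.val C.2.val := rfl
      by_cases hmx : max B.1.val C.1.val ≤ i0
      · set d : Grid h h := ((⟨i0, by omega⟩ : Fin (h+1)), (⟨W.2.val, by omega⟩ : Fin (h+1)))
          with hd
        have hd1 : d.1.val = i0 := rfl
        have hd2 : d.2.val = W.2.val := rfl
        have hdC : inC π d := by
          constructor
          · intro s hs
            have hse : s = π.symm ⟨W.2.val, hv⟩ := Fin.ext (by omega)
            rw [hse, Equiv.apply_symm_apply]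
          · intro s hs
            have hπse : π s = ⟨W.2.val, hv⟩ := Fin.ext (by omega)
            have hse : s = π.symm ⟨W.2.val, hv⟩ := by rw [← hπse, Equiv.symm_apply_apply]
            have : s.val = i0 := by rw [hse]
            omega
        have hdm : B ⊔ C ≤ d := by
          rw [grid_le_iff]
          omega
        have hnud := nu_le π hdC hdm
        rw [grid_le_iff] at hnud hW
        omega
      · push_neg at hmx
        rcases Nat.lt_or_ge i0 B.1.val with hb | hb
        · exact sub B hB (by omega) hb
        · exact sub C hC (by omega) (by omega)

lemma kl (π : Equiv.Perm (Fin h)) (hno : No321 π) {A B C : Grid h h}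
    (hA : inC π A) (hB : inC π B) (hC : inC π C) :
    ∀ n (W : Grid h h), B ⊔ C ≤ W → W ≤ nu π (B ⊔ C) → 2*h - W.1.val - W.2.val ≤ n →
      A ⊓ nu π W ≤ nu π (A ⊓ W) := by
  intro n
  induction n with
  | zero =>
    intro W _ _ hn
    have h1 := W.1.isLt
    have h2 := W.2.isLt
    have hCW : inC π W := by
      constructor
      · intro s hs; have := s.isLt; omega
      · intro s hs; have := (π s).isLt; omega
    rw [nu_eq_self π hCW]
    exact le_nu π (A ⊓ W)
  | succ n ih =>
    intro W hmW hWn hn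
    by_cases hCW : inC π W
    · rw [nu_eq_self π hCW]
      exact le_nu π (A ⊓ W)
    · have hnuW : nu π W = nu π (B ⊔ C) := by
        apply le_antisymm
        · exact nu_le π (inC_nu π (B ⊔ C)) hWn
        · exact nu_mono π hmW
      rw [inC, not_and_or] at hCW
      rcases hCW with hCW | hCW
      · -- x-step, use swapped version
        push_neg at hCW
        obtain ⟨s, hs, hlt⟩ := hCW
        have hu : W.1.val < h := hs ▸ s.isLt
        have hstep : (π ⟨W.1.val, hu⟩).val < W.2.val := by
          have : (⟨W.1.val, hu⟩ : Fin h) = s := Fin.ext hs.symm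
          rw [this]; exact hlt
        set W' : Grid h h := ((⟨W.1.val + 1, Nat.succ_lt_succ hu⟩ : Fin (h+1)), W.2) with hW'
        have r1 : W'.1.val = W.1.val + 1 := rfl
        have r2 : W'.2.val = W.2.val := rfl
        have hW'le : W' ≤ nu π W := nu_xstep_le π hu hstep
        have hWW' : W ≤ W' := by rw [grid_le_iff]; omega
        have hnuW' : nu π W' = nu π W := by
          apply le_antisymm
          · exact nu_le π (inC_nu π W) hW'le
          · exact nu_mono π hWW'
        -- step inequality by swapping
        have hswA := (inC_sw π A).mpr hA
        have hswB := (inC_sw π B).mpr hB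
        have hswC := (inC_sw π C).mpr hC
        have hsm : sw B ⊔ sw C ≤ sw W := by rw [← sw_sup, sw_le_sw]; exact hmW
        have hsW : sw W ≤ nu π.symm (sw B ⊔ sw C) := by
          rw [← sw_sup, nu_sw, sw_le_sw]; exact hWn
        have hsv : (sw W).2.val < h := hu
        have hsstep : ((π.symm).symm ⟨(sw W).2.val, hsv⟩).val < (sw W).1.val := by
          rw [Equiv.symm_symm]
          exact hstep
        have hsw := kl_ystep π.symm (no321_symm hno) hswA hswB hswC hsm hsW hsv hsstep
        have key : A ⊓ W' ≤ nu π (A ⊓ W) := by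
          rw [← sw_le_sw, sw_inf]
          have hn : sw (nu π (A ⊓ W)) = nu π.symm (sw (A ⊓ W)) := (nu_sw π _).symm
          rw [hn, sw_inf]
          exact hsw
        have ih' := ih W' (le_trans hmW hWW') (by rw [← hnuW]; exact hW'le) (by omega)
        calc A ⊓ nu π W = A ⊓ nu π W' := by rw [hnuW']
          _ ≤ nu π (A ⊓ W') := ih'
          _ ≤ nu π (nu π (A ⊓ W)) := nu_mono π key
          _ = nu π (A ⊓ W) := nu_nu π _
      · -- y-step, direct
        push_neg at hCW
        obtain ⟨s, hs, hlt⟩ := hCW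
        have hv : W.2.val < h := hs ▸ (π s).isLt
        have hstep : (π.symm ⟨W.2.val, hv⟩).val < W.1.val := by
          have he : (⟨W.2.val, hv⟩ : Fin h) = π s := Fin.ext hs.symm
          rw [he, Equiv.symm_apply_apply]
          exact hlt
        set W' : Grid h h := (W.1, (⟨W.2.val + 1, Nat.succ_lt_succ hv⟩ : Fin (h+1))) with hW'
        have r1 : W'.1.val = W.1.val := rfl
        have r2 : W'.2.val = W.2.val + 1 := rfl
        have hW'le : W' ≤ nu π W := nu_ystep_le π hv hstep
        have hWW' : W ≤ W' := by rw [grid_le_iff]; omega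
        have hnuW' : nu π W' = nu π W := by
          apply le_antisymm
          · exact nu_le π (inC_nu π W) hW'le
          · exact nu_mono π hWW'
        have key : A ⊓ W' ≤ nu π (A ⊓ W) := kl_ystep π hno hA hB hC hmW hWn hv hstep
        have ih' := ih W' (le_trans hmW hWW') (by rw [← hnuW]; exact hW'le) (by omega)
        calc A ⊓ nu π W = A ⊓ nu π W' := by rw [hnuW']
          _ ≤ nu π (A ⊓ W') := ih'
          _ ≤ nu π (nu π (A ⊓ W)) := nu_mono π key
          _ = nu π (A ⊓ W) := nu_nu π _

lemma grid_distrib (A B C : Grid h h) : A ⊓ (B ⊔ C) = (A ⊓ B) ⊔ (A ⊓ C) := by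
  rw [grid_eq_iff]
  have r1 : (A ⊓ (B ⊔ C)).1.val = min A.1.val (max B.1.val C.1.val) := rfl
  have r2 : (A ⊓ (B ⊔ C)).2.val = min A.2.val (max B.2.val C.2.val) := rfl
  have r3 : ((A ⊓ B) ⊔ (A ⊓ C)).1.val = max (min A.1.val B.1.val) (min A.1.val C.1.val) := rfl
  have r4 : ((A ⊓ B) ⊔ (A ⊓ C)).2.val = max (min A.2.val B.2.val) (min A.2.val C.2.val) := rfl
  omega

lemma distrib_of_no321 (π : Equiv.Perm (Fin h)) (hno : No321 π) (a b c : Grid h h) :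
    nu π (nu π a ⊓ nu π (b ⊔ c)) = nu π ((nu π a ⊓ nu π b) ⊔ (nu π a ⊓ nu π c)) := by
  have hbc : nu π (b ⊔ c) = nu π (nu π b ⊔ nu π c) := by
    rw [nu_sup_left, nu_sup_right]
  rw [hbc]
  have hA := inC_nu π a
  have hB := inC_nu π b
  have hC := inC_nu π c
  have hd := grid_distrib (nu π a) (nu π b) (nu π c)
  apply le_antisymm
  · have h1 : nu π a ⊓ nu π (nu π b ⊔ nu π c) ≤ nu π (nu π a ⊓ (nu π b ⊔ nu π c)) :=
      kl π hno hA hB hC (2*h) (nu π b ⊔ nu π c) le_rfl (le_nu π _) (by omega)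
    calc nu π (nu π a ⊓ nu π (nu π b ⊔ nu π c))
        ≤ nu π (nu π (nu π a ⊓ (nu π b ⊔ nu π c))) := nu_mono π h1
      _ = nu π (nu π a ⊓ (nu π b ⊔ nu π c)) := nu_nu π _
      _ = nu π ((nu π a ⊓ nu π b) ⊔ (nu π a ⊓ nu π c)) := by rw [hd]
  · apply nu_mono π
    rw [← hd]
    exact inf_le_inf_left (nu π a) (le_nu π _)

lemma not_distrib_of_321 (π : Equiv.Perm (Fin h))
    (hex : ∃ i j k : Fin h, i < j ∧ j < k ∧ π k < π j ∧ π j < π i) :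
    ∃ a b c : Grid h h,
      nu π (nu π a ⊓ nu π (b ⊔ c)) ≠ nu π ((nu π a ⊓ nu π b) ⊔ (nu π a ⊓ nu π c)) := by
  obtain ⟨i, j, k, hij, hjk, hkj, hji⟩ := hex
  rw [Fin.lt_def] at hij hjk
  rw [Fin.lt_def] at hkj hji
  have hkh := k.isLt
  have hjh := j.isLt
  have hπjh := (π j).isLt
  have hj1 : j.val + 1 < h := by omega
  set j1 : Fin h := ⟨j.val + 1, hj1⟩ with hj1def
  have rj1 : j1.val = j.val + 1 := rfl
  -- adjust k
  obtain ⟨k', hπk', hc1, hk'j⟩ :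
      ∃ k' : Fin h, (π k').val < (π j).val ∧ (π k').val ≤ (π j1).val ∧ j.val < k'.val := by
    by_cases hk : (π j1).val < (π k).val
    · exact ⟨j1, by omega, le_rfl, by omega⟩
    · exact ⟨k, by omega, by omega, by omega⟩
  -- adjust i
  obtain ⟨i', hπi', hij', hF5⟩ :
      ∃ i' : Fin h, (π j).val < (π i').val ∧ i'.val < j.val ∧
        ∀ hh : (π j).val + 1 < h, i'.val ≤ (π.symm ⟨(π j).val + 1, hh⟩).val := by
    by_cases hπjh1 : (π j).val + 1 < h
    · set t : Fin h := π.symm ⟨(π j).val + 1, hπjh1⟩ with htdef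
      have hπt : (π t).val = (π j).val + 1 := by
        rw [htdef, Equiv.apply_symm_apply]
      have htj : t.val ≠ j.val := by
        intro he
        have het : t = j := Fin.ext he
        rw [het] at hπt
        omega
      by_cases ht : t.val < i.val
      · refine ⟨t, by omega, by omega, fun hh => ?_⟩
        have : (⟨(π j).val + 1, hh⟩ : Fin h) = ⟨(π j).val + 1, hπjh1⟩ := rfl
        rw [this]
      · refine ⟨i, by omega, by omega, fun hh => ?_⟩
        have : (⟨(π j).val + 1, hh⟩ : Fin h) = ⟨(π j).val + 1, hπjh1⟩ := rfl
        rw [this, ← htdef]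
        omega
    · exact ⟨i, by omega, by omega, fun hh => absurd hh hπjh1⟩
  have hi'h := i'.isLt
  have hπk'h := (π k').isLt
  -- the witnesses
  set a : Grid h h := ((⟨i'.val, by omega⟩ : Fin (h+1)), (⟨(π j).val + 1, by omega⟩ : Fin (h+1)))
    with hadef
  set b : Grid h h := ((⟨i'.val, by omega⟩ : Fin (h+1)), (⟨(π j).val, by omega⟩ : Fin (h+1)))
    with hbdef
  set c : Grid h h := ((⟨j.val + 1, by omega⟩ : Fin (h+1)), (⟨(π k').val, by omega⟩ : Fin (h+1)))
    with hcdef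
  have ra1 : a.1.val = i'.val := rfl
  have ra2 : a.2.val = (π j).val + 1 := rfl
  have rb1 : b.1.val = i'.val := rfl
  have rb2 : b.2.val = (π j).val := rfl
  have rc1 : c.1.val = j.val + 1 := rfl
  have rc2 : c.2.val = (π k').val := rfl
  have haC : inC π a := by
    constructor
    · intro s hs
      have : s = i' := Fin.ext (by omega)
      rw [this]
      omega
    · intro s hs
      have hsh : (π j).val + 1 < h := by
        have := (π s).isLt; omega
      have : π s = ⟨(π j).val + 1, hsh⟩ := Fin.ext (by rw [ra2] at hs; exact hs)
      have hse : s = π.symm ⟨(π j).val + 1, hsh⟩ := by rw [← this, Equiv.symm_apply_apply]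
      have := hF5 hsh
      rw [← hse] at this
      omega
  have hbC : inC π b := by
    constructor
    · intro s hs
      have : s = i' := Fin.ext (by omega)
      rw [this]
      omega
    · intro s hs
      have : π s = π j := Fin.ext (by rw [rb2] at hs; exact hs)
      have hse : s = j := π.injective this
      rw [hse]
      omega
  have hcC : inC π c := by
    constructor
    · intro s hs
      have : s = j1 := Fin.ext (by omega)
      rw [this]
      omega
    · intro s hs
      have : π s = π k' := Fin.ext (by rw [rc2] at hs; exact hs)
      have hse : s = k' := π.injective this
      rw [hse]
      omega
  have hna := nu_eq_self π haC
  have hnb := nu_eq_self π hbC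
  have hnc := nu_eq_self π hcC
  -- RHS computation
  have hE : (a ⊓ b) ⊔ (a ⊓ c) = b := by
    rw [grid_eq_iff]
    have r1 : ((a ⊓ b) ⊔ (a ⊓ c)).1.val
        = max (min a.1.val b.1.val) (min a.1.val c.1.val) := rfl
    have r2 : ((a ⊓ b) ⊔ (a ⊓ c)).2.val
        = max (min a.2.val b.2.val) (min a.2.val c.2.val) := rfl
    omega
  -- LHS computation
  have rw1 : (b ⊔ c).1.val = max b.1.val c.1.val := rfl
  have rw2 : (b ⊔ c).2.val = max b.2.val c.2.val := rfl
  have hv : (b ⊔ c).2.val < h := by omega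
  have hstep : (π.symm ⟨(b ⊔ c).2.val, hv⟩).val < (b ⊔ c).1.val := by
    have : (⟨(b ⊔ c).2.val, hv⟩ : Fin h) = π j := Fin.ext (by
      rw [rw2]; rw [rb2, rc2] at *; omega)
    rw [this, Equiv.symm_apply_apply]
    omega
  have hyle := nu_ystep_le π hv hstep
  rw [show (((b ⊔ c).1, (b ⊔ c).2) : Grid h h) = b ⊔ c from rfl] at hyle
  have hnle := le_nu π (b ⊔ c)
  rw [grid_le_iff] at hyle hnle
  have ry1 : (((b ⊔ c).1, (⟨(b ⊔ c).2.val + 1, Nat.succ_lt_succ hv⟩ : Fin (h+1))) : Grid h h).1.val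
      = (b ⊔ c).1.val := rfl
  have ry2 : (((b ⊔ c).1, (⟨(b ⊔ c).2.val + 1, Nat.succ_lt_succ hv⟩ : Fin (h+1))) : Grid h h).2.val
      = (b ⊔ c).2.val + 1 := rfl
  have hAw : a ⊓ nu π (b ⊔ c) = a := by
    rw [grid_eq_iff]
    have r1 : (a ⊓ nu π (b ⊔ c)).1.val = min a.1.val (nu π (b ⊔ c)).1.val := rfl
    have r2 : (a ⊓ nu π (b ⊔ c)).2.val = min a.2.val (nu π (b ⊔ c)).2.val := rfl
    omega
  refine ⟨a, b, c, ?_⟩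
  rw [hna, hnb, hnc, hE, hAw, hna, hnb]
  intro heq
  rw [grid_eq_iff] at heq
  omega

lemma qk_eq_iff (π : Equiv.Perm (Fin h)) {a b : Grid h h} :
    Quot.mk (bet π) a = Quot.mk (bet π) b ↔ bet π a b := by
  rw [Quot.eq, Equivalence.eqvGen_eq (equivalence_bet π)]

noncomputable def qsup (π : Equiv.Perm (Fin h)) :
    Quot (bet π) → Quot (bet π) → Quot (bet π) :=
  Quot.map₂ (· ⊔ ·)
    (fun a b₁ b₂ hb => by
      have := (isJoinCong_bet π).2 b₁ b₂ a hb
      rwa [sup_comm b₁ a, sup_comm b₂ a] at this)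
    (fun a₁ a₂ b ha => (isJoinCong_bet π).2 a₁ a₂ b ha)

noncomputable def qinf (π : Equiv.Perm (Fin h)) :
    Quot (bet π) → Quot (bet π) → Quot (bet π) :=
  Quot.map₂ (fun a b => nu π a ⊓ nu π b)
    (fun a b₁ b₂ hb => by
      have hn : nu π b₁ = nu π b₂ := bet_to_nu π hb
      show bet π (nu π a ⊓ nu π b₁) (nu π a ⊓ nu π b₂)
      rw [hn]
      exact (equivalence_bet π).refl _)
    (fun a₁ a₂ b ha => by
      have hn : nu π a₁ = nu π a₂ := bet_to_nu π ha
      show bet π (nu π a₁ ⊓ nu π b) (nu π a₂ ⊓ nu π b)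
      rw [hn]
      exact (equivalence_bet π).refl _)

lemma qsup_mk (π : Equiv.Perm (Fin h)) (a b : Grid h h) :
    qsup π (Quot.mk _ a) (Quot.mk _ b) = Quot.mk _ (a ⊔ b) := rfl

lemma qinf_mk (π : Equiv.Perm (Fin h)) (a b : Grid h h) :
    qinf π (Quot.mk _ a) (Quot.mk _ b) = Quot.mk _ (nu π a ⊓ nu π b) := rfl

noncomputable def qlat (π : Equiv.Perm (Fin h)) : Lattice (Quot (bet π)) := by
  letI : Max (Quot (bet π)) := ⟨qsup π⟩
  letI : Min (Quot (bet π)) := ⟨qinf π⟩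
  refine Lattice.mk' ?_ ?_ ?_ ?_ ?_ ?_
  · intro x y
    induction x using Quot.ind with | _ a => ?_
    induction y using Quot.ind with | _ b => ?_
    exact congrArg (Quot.mk _) (sup_comm a b)
  · intro x y z
    induction x using Quot.ind with | _ a => ?_
    induction y using Quot.ind with | _ b => ?_
    induction z using Quot.ind with | _ c => ?_
    exact congrArg (Quot.mk _) (sup_assoc a b c)
  · intro x y
    induction x using Quot.ind with | _ a => ?_
    induction y using Quot.ind with | _ b => ?_
    exact congrArg (Quot.mk _) (inf_comm (nu π a) (nu π b))
  · intro x y z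
    induction x using Quot.ind with | _ a => ?_
    induction y using Quot.ind with | _ b => ?_
    induction z using Quot.ind with | _ c => ?_
    have e1 : nu π (nu π a ⊓ nu π b) = nu π a ⊓ nu π b :=
      nu_eq_self π (inC_inf π (inC_nu π a) (inC_nu π b))
    have e2 : nu π (nu π b ⊓ nu π c) = nu π b ⊓ nu π c :=
      nu_eq_self π (inC_inf π (inC_nu π b) (inC_nu π c))
    refine congrArg (Quot.mk _) ?_
    show nu π (nu π a ⊓ nu π b) ⊓ nu π c = nu π a ⊓ nu π (nu π b ⊓ nu π c)
    rw [e1, e2, inf_assoc]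
  · intro x y
    induction x using Quot.ind with | _ a => ?_
    induction y using Quot.ind with | _ b => ?_
    refine Quot.sound ((bet_iff_nu π _ _).mpr ?_)
    show nu π (a ⊔ (nu π a ⊓ nu π b)) = nu π a
    apply le_antisymm
    · exact nu_le π (inC_nu π a) (sup_le (le_nu π a) inf_le_left)
    · exact nu_mono π le_sup_left
  · intro x y
    induction x using Quot.ind with | _ a => ?_
    induction y using Quot.ind with | _ b => ?_
    refine Quot.sound ((bet_iff_nu π _ _).mpr ?_)
    have e : nu π a ⊓ nu π (a ⊔ b) = nu π a := inf_eq_left.mpr (nu_mono π le_sup_left)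
    show nu π (nu π a ⊓ nu π (a ⊔ b)) = nu π a
    rw [e, nu_nu]

lemma qlat_le_iff (π : Equiv.Perm (Fin h)) (a b : Grid h h) :
    (qlat π).le (Quot.mk _ a) (Quot.mk _ b) ↔ bet π (a ⊔ b) b := by
  letI := qlat π
  have h1 : (qlat π).le (Quot.mk (bet π) a) (Quot.mk (bet π) b) ↔
      Quot.mk (bet π) a ≤ Quot.mk (bet π) b := Iff.rfl
  rw [h1, ← sup_eq_right]
  have h2 : Quot.mk (bet π) a ⊔ Quot.mk (bet π) b = Quot.mk (bet π) (a ⊔ b) := rfl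
  rw [h2]
  exact qk_eq_iff π

lemma qdistrib_iff (π : Equiv.Perm (Fin h)) :
    (∀ x y z : Quot (bet π),
      (qlat π).inf x ((qlat π).sup y z) = (qlat π).sup ((qlat π).inf x y) ((qlat π).inf x z))
    ↔ ∀ a b c : Grid h h,
      nu π (nu π a ⊓ nu π (b ⊔ c)) = nu π ((nu π a ⊓ nu π b) ⊔ (nu π a ⊓ nu π c)) := by
  have hinf : ∀ x y, (qlat π).inf x y = qinf π x y := fun _ _ => rfl
  have hsup : ∀ x y, (qlat π).sup x y = qsup π x y := fun _ _ => rfl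
  constructor
  · intro H a b c
    have e := H (Quot.mk _ a) (Quot.mk _ b) (Quot.mk _ c)
    rw [hinf, hsup, hinf, hinf, hsup, qsup_mk, qinf_mk, qinf_mk, qinf_mk, qsup_mk] at e
    have hb := (qk_eq_iff π).mp e
    rw [bet_iff_nu] at hb
    exact hb
  · intro H x y z
    induction x using Quot.ind with | _ a => ?_
    induction y using Quot.ind with | _ b => ?_
    induction z using Quot.ind with | _ c => ?_
    rw [hinf, hsup, hinf, hinf, hsup, qsup_mk, qinf_mk, qinf_mk, qinf_mk, qsup_mk]
    exact Quot.sound ((bet_iff_nu π _ _).mpr (H a b c))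

end GridCong

/-- Let `π` be a permutation of `{1,…,h}` and let `β` be the join of the
join-congruences `cg(i, π(i))` of the grid `K_{h,h}`.  Then `β` is an equivalence
relation, the relation `[a] ≤ [b] ↔ β (a ⊔ b) b` is a well-defined partial order making
the quotient a lattice (i.e. there is a lattice structure on the quotient whose order is
given by this rule), and this lattice is distributive if and only if `π` contains no
321 pattern. -/
theorem grid_quotient_distrib_iff_no321 (h : ℕ) (π : Equiv.Perm (Fin h))
    (β : Grid h h → Grid h h → Prop)
    (hβ : β = joinCongSup fun s : Fin h => cg h h (s.val + 1) ((π s).val + 1)) :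
    Equivalence β ∧
    ∃ L : Lattice (Quot β),
      (∀ a b : Grid h h, L.le (Quot.mk β a) (Quot.mk β b) ↔ β (a ⊔ b) b) ∧
      ((∀ x y z : Quot β, L.inf x (L.sup y z) = L.sup (L.inf x y) (L.inf x z)) ↔
        ¬ ∃ i j k : Fin h, i < j ∧ j < k ∧ π k < π j ∧ π j < π i) := by

  have hbe : β = GridCong.bet π := hβ
  subst hbe
  refine ⟨GridCong.equivalence_bet π, GridCong.qlat π, GridCong.qlat_le_iff π, ?_⟩
  rw [GridCong.qdistrib_iff π]
  constructor
  · intro H hex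
    obtain ⟨a, b, c, hne⟩ := GridCong.not_distrib_of_321 π hex
    exact hne (H a b c)
  · intro hno a b c
    exact GridCong.distrib_of_no321 π hno a b c
end

section
/- For every h ≥ 0, the number of permutations of {1,…,h} that contain no 321 pattern (i.e., no indices i < j < k with π(i) > π(j) > π(k)) equals the h-th Catalan number C_h = (1/(h+1))·binom(2h, h). -/
namespace No321

abbrev Stair (n : ℕ) := {f : Fin n → Fin n // (∀ i j : Fin n, i ≤ j → f i ≤ f j) ∧ ∀ i, i ≤ f i}

def splitFun {n : ℕ} (m : Fin (n+1)) (g : Stair m) (h : Stair (n - m)) :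
    Fin (n+1) → Fin (n+1) := fun i =>
  if hi : (i : ℕ) < (m : ℕ) then
    ⟨(g.1 ⟨i, hi⟩ : ℕ) + 1, by have := (g.1 ⟨i, hi⟩).isLt; omega⟩
  else if hi2 : (i : ℕ) = (m : ℕ) then m
  else
    ⟨(h.1 ⟨(i : ℕ) - ((m : ℕ) + 1), by have := i.isLt; omega⟩ : ℕ) + (m : ℕ) + 1, by
      have := (h.1 ⟨(i : ℕ) - ((m : ℕ) + 1), by have := i.isLt; omega⟩).isLt
      have := m.isLt; omega⟩

lemma splitFun_val_lt {n : ℕ} (m : Fin (n+1)) (g : Stair m) (h : Stair (n - m))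
    {i : Fin (n+1)} (hi : (i : ℕ) < (m : ℕ)) :
    (splitFun m g h i : ℕ) = (g.1 ⟨i, hi⟩ : ℕ) + 1 := by
  rw [splitFun, dif_pos hi]

lemma splitFun_val_eq {n : ℕ} (m : Fin (n+1)) (g : Stair m) (h : Stair (n - m))
    {i : Fin (n+1)} (hi : (i : ℕ) = (m : ℕ)) :
    (splitFun m g h i : ℕ) = (m : ℕ) := by
  rw [splitFun, dif_neg (by omega), dif_pos hi]

lemma splitFun_val_gt {n : ℕ} (m : Fin (n+1)) (g : Stair m) (h : Stair (n - m))
    {i : Fin (n+1)} (hi : (m : ℕ) < (i : ℕ)) :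
    (splitFun m g h i : ℕ) =
      (h.1 ⟨(i : ℕ) - ((m : ℕ) + 1), by have := i.isLt; omega⟩ : ℕ) + (m : ℕ) + 1 := by
  rw [splitFun, dif_neg (by omega), dif_neg (by omega)]

lemma splitFun_val_lt' {n : ℕ} (m : Fin (n+1)) (g : Stair m) (h : Stair (n - m))
    (k : Fin (m : ℕ)) {i : Fin (n+1)} (hi : (i : ℕ) = (k : ℕ)) :
    (splitFun m g h i : ℕ) = (g.1 k : ℕ) + 1 := by
  have hk : (i : ℕ) < (m : ℕ) := by rw [hi]; exact k.isLt
  rw [splitFun_val_lt m g h hk]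
  exact congrArg (fun x : Fin (m : ℕ) => (g.1 x : ℕ) + 1) (Fin.ext hi)

lemma splitFun_val_gt' {n : ℕ} (m : Fin (n+1)) (g : Stair m) (h : Stair (n - m))
    (k : Fin (n - (m : ℕ))) {i : Fin (n+1)} (hi : (i : ℕ) = (m : ℕ) + 1 + (k : ℕ)) :
    (splitFun m g h i : ℕ) = (h.1 k : ℕ) + (m : ℕ) + 1 := by
  have hk : (m : ℕ) < (i : ℕ) := by omega
  rw [splitFun_val_gt m g h hk]
  exact congrArg (fun x : Fin (n - (m : ℕ)) => (h.1 x : ℕ) + (m : ℕ) + 1)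
    (Fin.ext (show (i : ℕ) - ((m : ℕ) + 1) = (k : ℕ) by omega))

end No321

namespace No321

lemma stair_mono_nat {n : ℕ} (f : Stair n) {i j : ℕ} (hi : i < n) (hj : j < n) (hij : i ≤ j) :
    (f.1 ⟨i, hi⟩ : ℕ) ≤ (f.1 ⟨j, hj⟩ : ℕ) :=
  f.2.1 ⟨i, hi⟩ ⟨j, hj⟩ hij

lemma stair_ge_nat {n : ℕ} (f : Stair n) {i : ℕ} (hi : i < n) : i ≤ (f.1 ⟨i, hi⟩ : ℕ) :=
  f.2.2 ⟨i, hi⟩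

lemma splitFun_stair {n : ℕ} (m : Fin (n+1)) (g : Stair m) (h : Stair (n - m)) :
    (∀ i j : Fin (n+1), i ≤ j → splitFun m g h i ≤ splitFun m g h j) ∧
      ∀ i, i ≤ splitFun m g h i := by
  have key : ∀ i : Fin (n+1), (i : ℕ) ≤ (splitFun m g h i : ℕ) ∧
      ((i : ℕ) < m → (i : ℕ) < (splitFun m g h i : ℕ)) ∧ (splitFun m g h i : ℕ) ≤
        max (m : ℕ) ((splitFun m g h i : ℕ)) := by
    intro i
    rcases lt_trichotomy (i : ℕ) (m : ℕ) with hi | hi | hi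
    · rw [splitFun_val_lt m g h hi]
      have := stair_ge_nat g (show (i:ℕ) < (m:ℕ) from hi)
      omega
    · rw [splitFun_val_eq m g h hi]; omega
    · rw [splitFun_val_gt m g h hi]
      have := stair_ge_nat h (show (i:ℕ) - ((m:ℕ)+1) < n - (m:ℕ) by have := i.isLt; omega)
      omega
  constructor
  · intro i j hij
    rw [Fin.le_def] at hij ⊢
    rcases lt_trichotomy (i : ℕ) (m : ℕ) with hi | hi | hi <;>
      rcases lt_trichotomy (j : ℕ) (m : ℕ) with hj | hj | hj
    · rw [splitFun_val_lt m g h hi, splitFun_val_lt m g h hj]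
      have := stair_mono_nat g hi hj hij; omega
    · rw [splitFun_val_lt m g h hi, splitFun_val_eq m g h hj]
      have := (g.1 ⟨i, hi⟩).isLt; omega
    · rw [splitFun_val_lt m g h hi, splitFun_val_gt m g h hj]
      have := (g.1 ⟨i, hi⟩).isLt; omega
    · omega
    · rw [splitFun_val_eq m g h hi, splitFun_val_eq m g h hj]
    · rw [splitFun_val_eq m g h hi, splitFun_val_gt m g h hj]; omega
    · omega
    · omega
    · rw [splitFun_val_gt m g h hi, splitFun_val_gt m g h hj]
      have := stair_mono_nat h (show (i:ℕ)-((m:ℕ)+1) < n - (m:ℕ) by have := i.isLt; omega)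
        (show (j:ℕ)-((m:ℕ)+1) < n - (m:ℕ) by have := j.isLt; omega) (by omega)
      omega
  · intro i
    rw [Fin.le_def]
    exact (key i).1

end No321

namespace No321

def M {n : ℕ} (f : Stair (n+1)) : Fin (n+1) :=
  (Finset.univ.filter (fun i => f.1 i = i)).min'
    ⟨Fin.last n, by
      simp only [Finset.mem_filter, Finset.mem_univ, true_and]
      exact le_antisymm (Fin.le_last _) (f.2.2 _)⟩

lemma M_fixed {n : ℕ} (f : Stair (n+1)) : f.1 (M f) = M f := by
  have := (Finset.univ.filter (fun i => f.1 i = i)).min'_mem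
    ⟨Fin.last n, by
      simp only [Finset.mem_filter, Finset.mem_univ, true_and]
      exact le_antisymm (Fin.le_last _) (f.2.2 _)⟩
  exact (Finset.mem_filter.mp this).2

lemma M_min {n : ℕ} (f : Stair (n+1)) {i : Fin (n+1)} (h : f.1 i = i) : M f ≤ i :=
  Finset.min'_le _ _ (by simp [h])

lemma lt_of_lt_M {n : ℕ} (f : Stair (n+1)) {i : Fin (n+1)} (h : (i:ℕ) < (M f : ℕ)) :
    (i : ℕ) < (f.1 i : ℕ) := by
  have hne : f.1 i ≠ i := fun he => absurd (M_min f he) (not_le.mpr h)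
  have hle : (i : ℕ) ≤ (f.1 i : ℕ) := f.2.2 i
  rcases lt_or_eq_of_le hle with h' | h'
  · exact h'
  · exact absurd (Fin.ext h'.symm) hne

def split {n : ℕ} (m : Fin (n+1)) (g : Stair m) (h : Stair (n - m)) : Stair (n+1) :=
  ⟨splitFun m g h, splitFun_stair m g h⟩

lemma M_split {n : ℕ} (m : Fin (n+1)) (g : Stair m) (h : Stair (n - m)) :
    M (split m g h) = m := by
  have h1 : (split m g h).1 m = m := by
    apply Fin.ext
    exact splitFun_val_eq m g h rfl
  apply le_antisymm (M_min _ h1)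
  by_contra hc
  push_neg at hc
  have hlt : ((M (split m g h)) : ℕ) < (m : ℕ) := Fin.lt_def.mp hc
  have h3 := congrArg Fin.val (M_fixed (split m g h))
  rw [show ((split m g h).1 (M (split m g h)) : ℕ) = _ from
    splitFun_val_lt m g h hlt] at h3
  have := stair_ge_nat g hlt
  omega

end No321

namespace No321

lemma lt_of_lt_M' {n : ℕ} (f : Stair (n+1)) {i : ℕ} (hi : i < n+1)
    (h : i < (M f : ℕ)) : i < (f.1 ⟨i, hi⟩ : ℕ) :=
  lt_of_lt_M f (i := ⟨i, hi⟩) h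

lemma M_fixed_val {n : ℕ} {m : Fin (n+1)} (f : Stair (n+1)) (hm : M f = m) :
    (f.1 m : ℕ) = (m : ℕ) := by
  have := congrArg Fin.val (M_fixed f)
  rw [hm] at this
  exact this

def leftPart {n : ℕ} (m : Fin (n+1)) (f : Stair (n+1)) (hm : M f = m) : Stair (m : ℕ) := by
  refine ⟨fun i => ⟨(f.1 ⟨i, lt_trans i.isLt m.isLt⟩ : ℕ) - 1, ?_⟩, ?_, ?_⟩
  · have h1 : (i : ℕ) < (f.1 ⟨i, lt_trans i.isLt m.isLt⟩ : ℕ) :=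
      lt_of_lt_M' f _ (by rw [hm]; exact i.isLt)
    have h2 : (f.1 ⟨i, lt_trans i.isLt m.isLt⟩ : ℕ) ≤ (m : ℕ) := by
      have h3 : f.1 ⟨i, lt_trans i.isLt m.isLt⟩ ≤ f.1 m := by
        apply f.2.1; rw [Fin.le_def]; exact le_of_lt i.isLt
      have h4 := M_fixed_val f hm
      omega
    omega
  · intro i j hij
    rw [Fin.le_def]
    have := stair_mono_nat f (lt_trans i.isLt m.isLt) (lt_trans j.isLt m.isLt) hij
    simp only []
    omega
  · intro i
    rw [Fin.le_def]
    have h1 : (i : ℕ) < (f.1 ⟨i, lt_trans i.isLt m.isLt⟩ : ℕ) :=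
      lt_of_lt_M' f _ (by rw [hm]; exact i.isLt)
    simp only []
    omega

def rightPart {n : ℕ} (m : Fin (n+1)) (f : Stair (n+1)) (hm : M f = m) :
    Stair (n - (m : ℕ)) := by
  refine ⟨fun j => ⟨(f.1 ⟨(m : ℕ) + 1 + (j : ℕ), by have := j.isLt; omega⟩ : ℕ) - ((m : ℕ) + 1),
    ?_⟩, ?_, ?_⟩
  · have h1 := (f.1 ⟨(m : ℕ) + 1 + (j : ℕ), by have := j.isLt; omega⟩).isLt
    have h2 := j.isLt
    have h3 := stair_ge_nat f (show (m:ℕ)+1+(j:ℕ) < n+1 by omega)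
    omega
  · intro i j hij
    rw [Fin.le_def]
    have := stair_mono_nat f (show (m:ℕ)+1+(i:ℕ) < n+1 by have := i.isLt; omega)
      (show (m:ℕ)+1+(j:ℕ) < n+1 by have := j.isLt; omega) (by omega)
    simp only []
    omega
  · intro j
    rw [Fin.le_def]
    have := stair_ge_nat f (show (m:ℕ)+1+(j:ℕ) < n+1 by have := j.isLt; omega)
    simp only []
    omega

def fiberEquiv {n : ℕ} (m : Fin (n+1)) :
    {f : Stair (n+1) // M f = m} ≃ Stair (m : ℕ) × Stair (n - (m : ℕ)) where
  toFun f := (leftPart m f.1 f.2, rightPart m f.1 f.2)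
  invFun p := ⟨split m p.1 p.2, M_split m p.1 p.2⟩
  left_inv := by
    rintro ⟨f, hm⟩
    apply Subtype.ext
    apply Subtype.ext
    funext i
    apply Fin.ext
    show (splitFun m (leftPart m f hm) (rightPart m f hm) i : ℕ) = (f.1 i : ℕ)
    rcases lt_trichotomy (i : ℕ) (m : ℕ) with hi | hi | hi
    · rw [splitFun_val_lt _ _ _ hi]
      have h1 : (i : ℕ) < (f.1 i : ℕ) := lt_of_lt_M f (by rw [hm]; exact hi)
      show ((f.1 ⟨(i:ℕ), _⟩ : ℕ) - 1) + 1 = (f.1 i : ℕ)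
      simp only [Fin.eta]
      omega
    · rw [splitFun_val_eq _ _ _ hi]
      have : f.1 i = i := by
        rw [show i = M f by apply Fin.ext; rw [hm]; exact hi]
        exact M_fixed f
      rw [this]; omega
    · rw [splitFun_val_gt _ _ _ hi]
      show ((f.1 ⟨(m:ℕ)+1+((i:ℕ)-((m:ℕ)+1)), _⟩ : ℕ) - ((m:ℕ)+1)) + (m:ℕ) + 1 = (f.1 i : ℕ)
      have he : ((m:ℕ)+1+((i:ℕ)-((m:ℕ)+1))) = (i : ℕ) := by have := i.isLt; omega
      rw [show (⟨(m:ℕ)+1+((i:ℕ)-((m:ℕ)+1)), by have := i.isLt; omega⟩ : Fin (n+1)) = i from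
        Fin.ext he]
      have hle : (i : ℕ) ≤ (f.1 i : ℕ) := by
        have := f.2.2 i; rwa [Fin.le_def] at this
      omega
  right_inv := by
    rintro ⟨g, h⟩
    refine Prod.ext ?_ ?_
    · apply Subtype.ext
      funext i
      apply Fin.ext
      show ((split m g h).1 ⟨(i:ℕ), _⟩ : ℕ) - 1 = (g.1 i : ℕ)
      rw [show ((split m g h).1 ⟨(i:ℕ), lt_trans i.isLt m.isLt⟩ : ℕ) = _ from
        splitFun_val_lt' m g h i rfl]
      omega
    · apply Subtype.ext
      funext j
      apply Fin.ext
      show ((split m g h).1 ⟨(m:ℕ)+1+(j:ℕ), _⟩ : ℕ) - ((m:ℕ)+1) = (h.1 j : ℕ)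
      rw [show ((split m g h).1 ⟨(m:ℕ)+1+(j:ℕ), by have := j.isLt; omega⟩ : ℕ) = _ from
        splitFun_val_gt' m g h j rfl]
      omega

end No321

namespace No321

lemma stair_card_zero : Fintype.card (Stair 0) = 1 := by
  refine Fintype.card_eq_one_iff.mpr ?_
  refine ⟨⟨fun i => i.elim0, fun i => i.elim0, fun i => i.elim0⟩, ?_⟩
  rintro ⟨g, hg⟩
  ext i
  exact i.elim0

lemma stair_card : ∀ n : ℕ, Fintype.card (Stair n) = catalan n := by
  intro n
  induction n using Nat.strong_induction_on with
  | _ n ih =>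
    match n with
    | 0 => simpa using stair_card_zero
    | (n+1) =>
      have h1 : Fintype.card (Stair (n+1)) =
          ∑ m : Fin (n+1), Fintype.card {f : Stair (n+1) // M f = m} := by
        rw [← Fintype.card_sigma]
        exact Fintype.card_congr (Equiv.sigmaFiberEquiv M).symm
      rw [h1, catalan_succ]
      apply Finset.sum_congr rfl
      intro m _
      rw [Fintype.card_congr (fiberEquiv m), Fintype.card_prod,
        ih m (by have := m.isLt; omega), ih (n - (m : ℕ)) (by omega)]

end No321

namespace No321

lemma card_filter_lt_orderEmbOfFin {α : Type*} [LinearOrder α]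
    (s : Finset α) {m : ℕ} (h : s.card = m) (k : Fin m) :
    (s.filter (fun x => x < s.orderEmbOfFin h k)).card = (k : ℕ) := by
  classical
  have he : s.filter (fun x => x < s.orderEmbOfFin h k) =
      (Finset.Iio k).image (s.orderEmbOfFin h) := by
    ext x
    simp only [Finset.mem_filter, Finset.mem_image, Finset.mem_Iio]
    constructor
    · rintro ⟨hxs, hlt⟩
      have : x ∈ Set.range (s.orderEmbOfFin h) := by
        rw [Finset.range_orderEmbOfFin]; exact hxs
      obtain ⟨i, rfl⟩ := this
      exact ⟨i, by rwa [← OrderEmbedding.lt_iff_lt (s.orderEmbOfFin h)], rfl⟩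
    · rintro ⟨i, hik, rfl⟩
      exact ⟨Finset.orderEmbOfFin_mem s h i,
        (OrderEmbedding.lt_iff_lt (s.orderEmbOfFin h)).mpr hik⟩
  rw [he, Finset.card_image_of_injective _ (s.orderEmbOfFin h).injective, Fin.card_Iio]

lemma strictMonoOn_image_eq {α β : Type*} [LinearOrder α] [LinearOrder β] [DecidableEq β]
    {s : Finset α} {f g : α → β} (hf : StrictMonoOn f s) (hg : StrictMonoOn g s)
    (him : s.image f = s.image g) : ∀ x ∈ s, f x = g x := by
  set k := s.card with hk
  have hcf : (s.image f).card = k := Finset.card_image_of_injOn hf.injOn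
  have hcg : (s.image g).card = k := Finset.card_image_of_injOn hg.injOn
  set e := s.orderEmbOfFin rfl with he
  have hmem : ∀ i : Fin k, e i ∈ s := fun i => Finset.orderEmbOfFin_mem s rfl i
  have hes : StrictMono e := (s.orderEmbOfFin rfl).strictMono
  have hfe : (fun i : Fin k => f (e i)) = ⇑((s.image f).orderEmbOfFin hcf) :=
    Finset.orderEmbOfFin_unique hcf
      (fun i => Finset.mem_image_of_mem f (hmem i))
      (fun a b hab => hf (hmem a) (hmem b) (hes hab))
  have hge : (fun i : Fin k => g (e i)) = ⇑((s.image g).orderEmbOfFin hcg) :=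
    Finset.orderEmbOfFin_unique hcg
      (fun i => Finset.mem_image_of_mem g (hmem i))
      (fun a b hab => hg (hmem a) (hmem b) (hes hab))
  have hsub : Finset.orderEmbOfFin (s.image f) hcf = Finset.orderEmbOfFin (s.image g)
      (him ▸ hcg) := by
    congr 1
  intro x hx
  have : x ∈ Set.range e := by rw [Finset.range_orderEmbOfFin]; exact hx
  obtain ⟨i, rfl⟩ := this
  have h1 := congrFun hfe i
  have h2 := congrFun hge i
  rw [h1, h2, hsub]

end No321

namespace No321

variable {n : ℕ}

def Avoids (π : Equiv.Perm (Fin n)) : Prop :=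
  ¬ ∃ i j k : Fin n, i < j ∧ j < k ∧ π k < π j ∧ π j < π i

def maxFun (π : Equiv.Perm (Fin n)) (i : Fin n) : Fin n :=
  (Finset.Iic i).sup' ⟨i, Finset.mem_Iic.mpr le_rfl⟩ π

lemma le_maxFun {π : Equiv.Perm (Fin n)} {i j : Fin n} (h : j ≤ i) : π j ≤ maxFun π i :=
  Finset.le_sup' _ (Finset.mem_Iic.mpr h)

lemma maxFun_le {π : Equiv.Perm (Fin n)} {i b : Fin n} (h : ∀ j, j ≤ i → π j ≤ b) :
    maxFun π i ≤ b :=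
  Finset.sup'_le _ _ (fun j hj => h j (Finset.mem_Iic.mp hj))

lemma exists_maxFun (π : Equiv.Perm (Fin n)) (i : Fin n) :
    ∃ j, j ≤ i ∧ π j = maxFun π i := by
  obtain ⟨j, hj, hj2⟩ := Finset.exists_mem_eq_sup' ⟨i, Finset.mem_Iic.mpr le_rfl⟩ π
  exact ⟨j, Finset.mem_Iic.mp hj, hj2.symm⟩

lemma maxFun_mono (π : Equiv.Perm (Fin n)) : ∀ i j : Fin n, i ≤ j →
    maxFun π i ≤ maxFun π j := fun i j hij =>
  maxFun_le (fun k hk => le_maxFun (le_trans hk hij))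

lemma self_le_maxFun (π : Equiv.Perm (Fin n)) (i : Fin n) : i ≤ maxFun π i := by
  have hsub : (Finset.Iic i).image π ⊆ Finset.Iic (maxFun π i) := by
    intro x hx
    obtain ⟨j, hj, rfl⟩ := Finset.mem_image.mp hx
    exact Finset.mem_Iic.mpr (le_maxFun (Finset.mem_Iic.mp hj))
  have hcard := Finset.card_le_card hsub
  rw [Finset.card_image_of_injective _ π.injective, Fin.card_Iic, Fin.card_Iic] at hcard
  exact Fin.le_def.mpr (by omega)

/-- Φ : the staircase function of a permutation. -/
def stairOf (π : Equiv.Perm (Fin n)) : Stair n :=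
  ⟨maxFun π, maxFun_mono π, self_le_maxFun π⟩

def IsRecord (π : Equiv.Perm (Fin n)) (i : Fin n) : Prop := ∀ j, j < i → π j < π i

instance (π : Equiv.Perm (Fin n)) (i : Fin n) : Decidable (IsRecord π i) :=
  inferInstanceAs (Decidable (∀ j, j < i → π j < π i))

lemma maxFun_eq_of_record {π : Equiv.Perm (Fin n)} {i : Fin n} (h : IsRecord π i) :
    maxFun π i = π i := by
  refine le_antisymm (maxFun_le fun j hj => ?_) (le_maxFun le_rfl)
  rcases lt_or_eq_of_le hj with h' | h'
  · exact le_of_lt (h j h')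
  · rw [h']

lemma isRecord_iff {π : Equiv.Perm (Fin n)} {i : Fin n} :
    IsRecord π i ↔ ∀ j, j < i → maxFun π j < maxFun π i := by
  constructor
  · intro h j hj
    obtain ⟨k, hk, hk2⟩ := exists_maxFun π j
    rw [← hk2, maxFun_eq_of_record h]
    exact h k (lt_of_le_of_lt hk hj)
  · intro H
    have hfix : maxFun π i = π i := by
      obtain ⟨k, hk, hk2⟩ := exists_maxFun π i
      rcases lt_or_eq_of_le hk with h' | h'
      · exfalso
        have h1 : maxFun π i ≤ maxFun π k := hk2 ▸ le_maxFun le_rfl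
        exact absurd (H k h') (not_lt.mpr h1)
      · rw [← hk2, h']
    intro j hj
    calc π j ≤ maxFun π j := le_maxFun le_rfl
      _ < maxFun π i := H j hj
      _ = π i := hfix

lemma strictMonoOn_nonRecord {π : Equiv.Perm (Fin n)} (hπ : Avoids π) :
    StrictMonoOn π {i : Fin n | ¬ IsRecord π i} := by
  intro i hi j hj hij
  rcases lt_trichotomy (π i) (π j) with h | h | h
  · exact h
  · exact absurd (π.injective (Fin.ext (congrArg Fin.val h))) (ne_of_lt hij)
  · exfalso
    simp only [Set.mem_setOf_eq, IsRecord, not_forall] at hi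
    obtain ⟨k, hk, hk2⟩ := hi
    push_neg at hk2
    have hki : π i < π k := lt_of_le_of_ne hk2
      (fun he => absurd (π.injective (Fin.ext (congrArg Fin.val he.symm))) (ne_of_lt hk))
    exact hπ ⟨k, i, j, hk, hij, h, hki⟩

end No321

namespace No321

variable {n : ℕ}

lemma perm_image_compl (τ : Equiv.Perm (Fin n)) (S : Finset (Fin n)) :
    Sᶜ.image ⇑τ = (S.image ⇑τ)ᶜ := by
  ext x
  simp only [Finset.mem_image, Finset.mem_compl]
  constructor
  · rintro ⟨y, hy, rfl⟩ ⟨z, hz, hzy⟩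
    exact hy (by rwa [← τ.injective hzy])
  · intro hx
    exact ⟨τ.symm x, fun hmem => hx ⟨τ.symm x, hmem, τ.apply_symm_apply x⟩,
      τ.apply_symm_apply x⟩

lemma stairOf_inj {π σ : Equiv.Perm (Fin n)} (hπ : Avoids π) (hσ : Avoids σ)
    (heq : stairOf π = stairOf σ) : π = σ := by
  have hF : maxFun π = maxFun σ := congrArg Subtype.val heq
  have hrec : ∀ i, IsRecord π i ↔ IsRecord σ i := by
    intro i; rw [isRecord_iff, isRecord_iff, hF]
  set Jf := Finset.univ.filter (fun i => IsRecord π i) with hJf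
  have hJ : ∀ i ∈ Jf, π i = σ i := by
    intro i hi
    have hi' : IsRecord π i := by simpa [hJf] using hi
    rw [← maxFun_eq_of_record hi', ← maxFun_eq_of_record ((hrec i).mp hi'), hF]
  have hPc : (Jfᶜ : Finset (Fin n)) = Finset.univ.filter (fun i => ¬ IsRecord π i) := by
    ext x; simp [hJf]
  have him : Jfᶜ.image ⇑π = Jfᶜ.image ⇑σ := by
    rw [perm_image_compl, perm_image_compl, Finset.image_congr hJ]
  have hmonoπ : StrictMonoOn ⇑π ↑(Jfᶜ : Finset (Fin n)) := by
    intro i hi j hj hij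
    refine strictMonoOn_nonRecord hπ ?_ ?_ hij <;>
      · simp only [Finset.mem_coe, hPc, Finset.mem_filter] at *
        tauto
  have hmonoσ : StrictMonoOn ⇑σ ↑(Jfᶜ : Finset (Fin n)) := by
    intro i hi j hj hij
    refine strictMonoOn_nonRecord hσ ?_ ?_ hij <;>
      · simp only [Finset.mem_coe, hPc, Finset.mem_filter, hrec] at *
        tauto
  have hP := strictMonoOn_image_eq hmonoπ hmonoσ him
  apply Equiv.ext
  intro i
  by_cases hi : i ∈ Jf
  · exact hJ i hi
  · exact hP i (Finset.mem_compl.mpr hi)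

end No321

namespace No321

variable {n : ℕ}

/-- record positions of a staircase function -/
def recSet (f : Stair n) : Finset (Fin n) :=
  Finset.univ.filter (fun i => ∀ j, j < i → f.1 j < f.1 i)

/-- leftover values -/
def Vset (f : Stair n) : Finset (Fin n) := ((recSet f).image f.1)ᶜ

lemma recSet_strict {f : Stair n} {i j : Fin n} (hj : j ∈ recSet f) (hij : i < j) :
    f.1 i < f.1 j := by
  simp only [recSet, Finset.mem_filter] at hj
  exact hj.2 i hij

lemma strictMonoOn_recSet (f : Stair n) : StrictMonoOn f.1 ↑(recSet f) :=
  fun _ _ j hj hij => recSet_strict hj hij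

lemma card_V (f : Stair n) : (Vset f).card = ((recSet f)ᶜ).card := by
  rw [Vset, Finset.card_compl, Finset.card_compl,
    Finset.card_image_of_injOn (strictMonoOn_recSet f).injOn]

def rank (f : Stair n) (i : Fin n) (hi : i ∈ (recSet f)ᶜ) : Fin ((recSet f)ᶜ).card :=
  (((recSet f)ᶜ).orderIsoOfFin rfl).symm ⟨i, hi⟩

lemma emb_rank (f : Stair n) (i : Fin n) (hi : i ∈ (recSet f)ᶜ) :
    ((recSet f)ᶜ).orderEmbOfFin rfl (rank f i hi) = i := by
  have := Finset.coe_orderIsoOfFin_apply ((recSet f)ᶜ) rfl (rank f i hi)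
  rw [← this, rank, OrderIso.apply_symm_apply]

lemma rank_val (f : Stair n) (i : Fin n) (hi : i ∈ (recSet f)ᶜ) :
    (rank f i hi : ℕ) = (((recSet f)ᶜ).filter (fun x => x < i)).card := by
  have := card_filter_lt_orderEmbOfFin ((recSet f)ᶜ) rfl (rank f i hi)
  rw [emb_rank] at this
  exact this.symm

def psiFun (f : Stair n) : Fin n → Fin n := fun i =>
  if hi : i ∈ recSet f then f.1 i
  else (Vset f).orderEmbOfFin (card_V f) (rank f i (Finset.mem_compl.mpr hi))

lemma psiFun_record {f : Stair n} {i : Fin n} (hi : i ∈ recSet f) : psiFun f i = f.1 i :=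
  dif_pos hi

lemma psiFun_nonrecord {f : Stair n} {i : Fin n} (hi : i ∉ recSet f) :
    psiFun f i = (Vset f).orderEmbOfFin (card_V f) (rank f i (Finset.mem_compl.mpr hi)) :=
  dif_neg hi

lemma psiFun_mem_V {f : Stair n} {i : Fin n} (hi : i ∉ recSet f) : psiFun f i ∈ Vset f := by
  rw [psiFun_nonrecord hi]; exact Finset.orderEmbOfFin_mem _ _ _

/-- least position with the same f-value -/
def j0 (f : Stair n) (i : Fin n) : Fin n :=
  (Finset.univ.filter (fun j => f.1 j = f.1 i)).min' ⟨i, by simp⟩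

lemma f_j0 (f : Stair n) (i : Fin n) : f.1 (j0 f i) = f.1 i := by
  have := (Finset.univ.filter (fun j => f.1 j = f.1 i)).min'_mem ⟨i, by simp⟩
  simpa [j0] using this

lemma j0_le (f : Stair n) (i : Fin n) : j0 f i ≤ i :=
  Finset.min'_le _ _ (by simp)

lemma j0_record (f : Stair n) (i : Fin n) : j0 f i ∈ recSet f := by
  simp only [recSet, Finset.mem_filter, Finset.mem_univ, true_and]
  intro k hk
  have hle : f.1 k ≤ f.1 (j0 f i) := f.2.1 k (j0 f i) (le_of_lt hk)
  rcases lt_or_eq_of_le hle with h | h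
  · exact h
  · exfalso
    have hkmem : k ∈ Finset.univ.filter (fun j => f.1 j = f.1 i) := by
      simp only [Finset.mem_filter, Finset.mem_univ, true_and]
      rw [h, f_j0]
    exact absurd (Finset.min'_le _ _ hkmem) (not_le.mpr hk)

lemma j0_lt {f : Stair n} {i : Fin n} (hi : i ∉ recSet f) : j0 f i < i := by
  rcases lt_or_eq_of_le (j0_le f i) with h | h
  · exact h
  · exfalso; exact hi (h ▸ j0_record f i)

end No321

namespace No321

variable {n : ℕ}

lemma psiFun_lt {f : Stair n} {i : Fin n} (hi : i ∉ recSet f) : psiFun f i < f.1 i := by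
  set J := recSet f with hJ
  -- a = number of record positions below i, r = number of non-record positions below i
  set a := ((Finset.Iio i).filter (fun x => x ∈ J)).card with ha
  set r := ((Finset.Iio i).filter (fun x => x ∉ J)).card with hr
  have har : a + r = (i : ℕ) := by
    rw [ha, hr, Finset.card_filter_add_card_filter_not, Fin.card_Iio]
  -- the rank of i equals r
  have hrank : (rank f i (Finset.mem_compl.mpr hi) : ℕ) = r := by
    rw [rank_val, hr]
    congr 1
    ext x
    simp only [Finset.mem_filter, Finset.mem_compl, Finset.mem_Iio]
    tauto
  -- j0 is a record position strictly below i with the same value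
  have hj0 : j0 f i ∈ (Finset.Iio i).filter (fun x => x ∈ J) := by
    simp only [Finset.mem_filter, Finset.mem_Iio]
    exact ⟨j0_lt hi, j0_record f i⟩
  have ha1 : 1 ≤ a := Finset.card_pos.mpr ⟨j0 f i, hj0⟩
  -- records with value < F i are among records below i, minus j0
  have hsub : J.filter (fun j => f.1 j < f.1 i) ⊆
      ((Finset.Iio i).filter (fun x => x ∈ J)).erase (j0 f i) := by
    intro j hjmem
    simp only [Finset.mem_filter] at hjmem
    obtain ⟨hjJ, hjlt⟩ := hjmem
    simp only [Finset.mem_erase, Finset.mem_filter, Finset.mem_Iio]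
    refine ⟨?_, ?_, hjJ⟩
    · intro hje
      rw [hje, f_j0] at hjlt
      exact lt_irrefl _ hjlt
    · rcases lt_trichotomy j i with h' | h' | h'
      · exact h'
      · exact absurd (h' ▸ hjJ) hi
      · exact absurd (recSet_strict hjJ h') (not_lt.mpr (le_of_lt hjlt))
  have hcount1 : (J.filter (fun j => f.1 j < f.1 i)).card ≤ a - 1 := by
    calc (J.filter (fun j => f.1 j < f.1 i)).card
        ≤ (((Finset.Iio i).filter (fun x => x ∈ J)).erase (j0 f i)).card :=
          Finset.card_le_card hsub
      _ = a - 1 := by rw [Finset.card_erase_of_mem hj0]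
  -- counting leftover values below F i
  have himg : (J.image f.1).filter (fun x => x < f.1 i) =
      (J.filter (fun j => f.1 j < f.1 i)).image f.1 := Finset.filter_image
  have hcount2 : ((J.image f.1).filter (fun x => x < f.1 i)).card ≤ a - 1 := by
    rw [himg]
    calc ((J.filter (fun j => f.1 j < f.1 i)).image f.1).card
        ≤ (J.filter (fun j => f.1 j < f.1 i)).card := Finset.card_image_le
      _ ≤ a - 1 := hcount1
  have hVsplit : (Vset f).filter (fun x => x < f.1 i) =
      Finset.Iio (f.1 i) \ ((J.image f.1).filter (fun x => x < f.1 i)) := by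
    ext x
    simp only [Vset, Finset.mem_filter, Finset.mem_compl, Finset.mem_sdiff, Finset.mem_Iio]
    tauto
  have hVcard : ((Vset f).filter (fun x => x < f.1 i)).card ≥ (f.1 i : ℕ) - (a - 1) := by
    rw [hVsplit]
    have h1 : ((J.image f.1).filter (fun x => x < f.1 i)) ⊆ Finset.Iio (f.1 i) := by
      intro x hx
      simp only [Finset.mem_filter] at hx
      exact Finset.mem_Iio.mpr hx.2
    rw [Finset.card_sdiff_of_subset h1, Fin.card_Iio]
    omega
  -- the staircase property
  have hge : (i : ℕ) ≤ (f.1 i : ℕ) := f.2.2 i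
  -- conclude
  by_contra hc
  push_neg at hc
  -- hc : F i ≤ psiFun f i
  have hsub2 : (Vset f).filter (fun x => x < f.1 i) ⊆
      (Vset f).filter (fun x => x < psiFun f i) := by
    intro x hx
    simp only [Finset.mem_filter] at hx ⊢
    exact ⟨hx.1, lt_of_lt_of_le hx.2 hc⟩
  have hkey := Finset.card_le_card hsub2
  rw [psiFun_nonrecord hi] at hkey
  rw [card_filter_lt_orderEmbOfFin (Vset f) (card_V f)
    (rank f i (Finset.mem_compl.mpr hi))] at hkey
  rw [hrank] at hkey
  omega

end No321

namespace No321

variable {n : ℕ}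

lemma psiFun_le (f : Stair n) (i : Fin n) : psiFun f i ≤ f.1 i := by
  by_cases hi : i ∈ recSet f
  · rw [psiFun_record hi]
  · exact le_of_lt (psiFun_lt hi)

lemma psiFun_strictMonoOn_compl (f : Stair n) :
    ∀ i j : Fin n, i ∉ recSet f → j ∉ recSet f → i < j → psiFun f i < psiFun f j := by
  intro i j hi hj hij
  rw [psiFun_nonrecord hi, psiFun_nonrecord hj]
  apply ((Vset f).orderEmbOfFin (card_V f)).strictMono
  apply (((recSet f)ᶜ).orderIsoOfFin rfl).symm.strictMono
  exact Subtype.mk_lt_mk.mpr hij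

lemma psiFun_injective (f : Stair n) : Function.Injective (psiFun f) := by
  have key : ∀ i j : Fin n, i < j → psiFun f i ≠ psiFun f j := by
    intro i j hlt hij
    by_cases hi : i ∈ recSet f <;> by_cases hj : j ∈ recSet f
    · rw [psiFun_record hi, psiFun_record hj] at hij
      exact absurd (hij ▸ recSet_strict hj hlt) (lt_irrefl _)
    · have h1 := psiFun_mem_V hj
      rw [← hij, psiFun_record hi] at h1
      rw [Vset, Finset.mem_compl] at h1
      exact h1 (Finset.mem_image_of_mem f.1 hi)
    · have h1 := psiFun_mem_V hi
      rw [hij, psiFun_record hj] at h1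
      rw [Vset, Finset.mem_compl] at h1
      exact h1 (Finset.mem_image_of_mem f.1 hj)
    · exact absurd (hij ▸ psiFun_strictMonoOn_compl f i j hi hj hlt) (lt_irrefl _)
  intro i j hij
  rcases lt_trichotomy i j with h | h | h
  · exact absurd hij (key i j h)
  · exact h
  · exact absurd hij.symm (key j i h)

/-- Ψ : the permutation associated to a staircase function. -/
noncomputable def psiPerm (f : Stair n) : Equiv.Perm (Fin n) :=
  Equiv.ofBijective (psiFun f) (Finite.injective_iff_bijective.mp (psiFun_injective f))

lemma psiPerm_apply (f : Stair n) (i : Fin n) : psiPerm f i = psiFun f i := rfl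

lemma psiPerm_avoids (f : Stair n) : Avoids (psiPerm f) := by
  rintro ⟨i, j, k, hij, hjk, h1, h2⟩
  rw [show ⇑(psiPerm f) = psiFun f from rfl] at h1 h2
  by_cases hj : j ∈ recSet f
  · -- π i ≤ f i ≤ f j = π j contradicts π j < π i
    have : psiFun f i ≤ psiFun f j := by
      rw [psiFun_record hj]
      exact le_trans (psiFun_le f i) (f.2.1 i j (le_of_lt hij))
    exact absurd h2 (not_lt.mpr this)
  · by_cases hk : k ∈ recSet f
    · have : psiFun f j ≤ psiFun f k := by
        rw [psiFun_record hk]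
        exact le_trans (le_of_lt (psiFun_lt hj)) (le_of_lt (recSet_strict hk hjk))
      exact absurd h1 (not_lt.mpr this)
    · exact absurd h1 (not_lt.mpr (le_of_lt (psiFun_strictMonoOn_compl f j k hj hk hjk)))

lemma stairOf_psiPerm (f : Stair n) : stairOf (psiPerm f) = f := by
  apply Subtype.ext
  funext i
  show maxFun (psiPerm f) i = f.1 i
  apply le_antisymm
  · apply maxFun_le
    intro j hj
    exact le_trans (psiFun_le f j) (f.2.1 j i hj)
  · have h1 : psiPerm f (j0 f i) = f.1 i := by
      rw [psiPerm_apply, psiFun_record (j0_record f i), f_j0]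
    exact h1 ▸ le_maxFun (j0_le f i)

end No321

namespace No321

instance {n : ℕ} : DecidablePred (Avoids (n := n)) := fun π =>
  inferInstanceAs (Decidable (¬ ∃ i j k : Fin n, i < j ∧ j < k ∧ π k < π j ∧ π j < π i))

lemma card_avoids (n : ℕ) :
    Nat.card {π : Equiv.Perm (Fin n) // Avoids π} = Fintype.card (Stair n) := by
  rw [Nat.card_eq_fintype_card]
  apply le_antisymm
  · apply Fintype.card_le_of_injective (fun p => stairOf p.1)
    rintro ⟨π, hπ⟩ ⟨σ, hσ⟩ hps
    exact Subtype.ext (stairOf_inj hπ hσ hps)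
  · apply Fintype.card_le_of_injective (fun f => (⟨psiPerm f, psiPerm_avoids f⟩ :
      {π : Equiv.Perm (Fin n) // Avoids π}))
    intro f g hfg
    have : psiPerm f = psiPerm g := congrArg Subtype.val hfg
    rw [← stairOf_psiPerm f, ← stairOf_psiPerm g, this]

end No321

/-- The number of permutations of `{1,…,h}` with no 321 pattern (no `i < j < k` with
`π(i) > π(j) > π(k)`) is the `h`-th Catalan number `(1/(h+1))·binom(2h,h)`. -/
theorem card_no321_eq_catalan (h : ℕ) :
    Nat.card {π : Equiv.Perm (Fin h) //
        ¬ ∃ i j k : Fin h, i < j ∧ j < k ∧ π k < π j ∧ π j < π i} =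
      Nat.choose (2 * h) h / (h + 1) := by
  have e1 := No321.card_avoids h
  rw [No321.stair_card h, catalan_eq_centralBinom_div] at e1
  rw [show Nat.choose (2 * h) h = h.centralBinom from rfl]
  exact e1
end

section
/- Let m, n, k ≥ 1, let 1 ≤ i_1 < ⋯ < i_k ≤ m, let j_1, …, j_k be pairwise distinct elements of {1,…,n}, and let β be the join of the join-congruences cg(i_1,j_1), …, cg(i_k,j_k) of the grid K_{m,n}. Then β is cover-preserving: on the quotient Q = K_{m,n}/β, the relation [a] ≤ [b] ⟺ (a ⊔ b, b) ∈ β is a well-defined partial order, and whenever a ⋖ b (a is covered by b) in K_{m,n}, either [a] = [b] or [a] is covered by [b] in Q. -/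
namespace CPaux

open Fin.NatCast

theorem sup_eq_max {α : Type*} [LinearOrder α] (a b : α) : a ⊔ b = max a b := rfl

/-! Generic facts about `joinCongGen`. -/

theorem isJoinCong_gen {α : Type*} [SemilatticeSup α] (R : α → α → Prop) :
    IsJoinCong (joinCongGen R) := by
  constructor
  · constructor
    · exact fun a r hr _ => hr.1.refl a
    · exact fun h r hr hR => hr.1.symm (h r hr hR)
    · exact fun h1 h2 r hr hR => hr.1.trans (h1 r hr hR) (h2 r hr hR)
  · exact fun a b c h r hr hR => hr.2 a b c (h r hr hR)

theorem gen_le {α : Type*} [SemilatticeSup α] {R r : α → α → Prop} (hr : IsJoinCong r)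
    (h : ∀ x y, R x y → r x y) {a b : α} (hab : joinCongGen R a b) : r a b := hab r hr h

theorem le_gen {α : Type*} [SemilatticeSup α] (R : α → α → Prop) {x y : α} (h : R x y) :
    joinCongGen R x y := fun r hr hR => hR x y h

/-! The rewriting system on `ℕ × ℕ`. -/

variable {k : ℕ} (i j : Fin k → ℕ)

def colC (p : ℕ × ℕ) : Prop := ∃ s, j s = p.2 + 1 ∧ i s ≤ p.1
def rowC (p : ℕ × ℕ) : Prop := ∃ s, i s = p.1 + 1 ∧ j s ≤ p.2

open Classical in
noncomputable def stp (p : ℕ × ℕ) : ℕ × ℕ :=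
  if colC i j p then (p.1, p.2 + 1) else if rowC i j p then (p.1 + 1, p.2) else p

noncomputable def F (m n : ℕ) (p : ℕ × ℕ) : ℕ × ℕ := (stp i j)^[m + n] p

theorem stp_of_col {p : ℕ × ℕ} (h : colC i j p) : stp i j p = (p.1, p.2 + 1) := by
  unfold stp; rw [if_pos h]

theorem stp_of_row {p : ℕ × ℕ} (h1 : ¬ colC i j p) (h2 : rowC i j p) :
    stp i j p = (p.1 + 1, p.2) := by
  unfold stp; rw [if_neg h1, if_pos h2]

theorem stp_of_not {p : ℕ × ℕ} (h1 : ¬ colC i j p) (h2 : ¬ rowC i j p) : stp i j p = p := by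
  unfold stp; rw [if_neg h1, if_neg h2]

theorem fix_not_col {p : ℕ × ℕ} (h : stp i j p = p) : ¬ colC i j p := by
  intro hc; rw [stp_of_col i j hc] at h
  exact absurd (congrArg Prod.snd h) (by simp)

theorem fix_not_row {p : ℕ × ℕ} (h : stp i j p = p) : ¬ rowC i j p := by
  intro hr
  by_cases hc : colC i j p
  · exact fix_not_col i j h hc
  · rw [stp_of_row i j hc hr] at h
    exact absurd (congrArg Prod.fst h) (by simp)

theorem le_stp (p : ℕ × ℕ) : p ≤ stp i j p := by
  by_cases hc : colC i j p
  · rw [stp_of_col i j hc]; exact ⟨le_refl _, Nat.le_succ _⟩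
  by_cases hr : rowC i j p
  · rw [stp_of_row i j hc hr]; exact ⟨Nat.le_succ _, le_refl _⟩
  · rw [stp_of_not i j hc hr]



variable (m n : ℕ)

def box (p : ℕ × ℕ) : Prop := p.1 ≤ m ∧ p.2 ≤ n

def mu (p : ℕ × ℕ) : ℕ := (m - p.1) + (n - p.2)

variable {i j}

theorem box_stp (hjn : ∀ s, j s ≤ n) (him : ∀ s, i s ≤ m) {p : ℕ × ℕ} (hp : box m n p) :
    box m n (stp i j p) := by
  by_cases hc : colC i j p
  · obtain ⟨s, hs1, hs2⟩ := hc
    rw [stp_of_col i j ⟨s, hs1, hs2⟩]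
    exact ⟨hp.1, hs1 ▸ hjn s⟩
  by_cases hr : rowC i j p
  · obtain ⟨s, hs1, hs2⟩ := hr
    rw [stp_of_row i j hc ⟨s, hs1, hs2⟩]
    exact ⟨hs1 ▸ him s, hp.2⟩
  · rwa [stp_of_not i j hc hr]

theorem mu_stp (hjn : ∀ s, j s ≤ n) (him : ∀ s, i s ≤ m) {p : ℕ × ℕ}
    (hne : stp i j p ≠ p) : mu m n (stp i j p) < mu m n p := by
  by_cases hc : colC i j p
  · obtain ⟨s, hs1, hs2⟩ := hc
    rw [stp_of_col i j ⟨s, hs1, hs2⟩]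
    have : p.2 + 1 ≤ n := hs1 ▸ hjn s
    unfold mu; simp only; omega
  by_cases hr : rowC i j p
  · obtain ⟨s, hs1, hs2⟩ := hr
    rw [stp_of_row i j hc ⟨s, hs1, hs2⟩]
    have : p.1 + 1 ≤ m := hs1 ▸ him s
    unfold mu; simp only; omega
  · exact absurd (stp_of_not i j hc hr) hne

theorem isFix_F (hjn : ∀ s, j s ≤ n) (him : ∀ s, i s ≤ m) {p : ℕ × ℕ} (hp : box m n p) :
    stp i j (F i j m n p) = F i j m n p := by
  suffices H : ∀ t q, box m n q → mu m n q ≤ t → stp i j ((stp i j)^[t] q) = (stp i j)^[t] q by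
    exact H (m+n) p hp (by unfold mu; omega)
  intro t
  induction t with
  | zero =>
    intro q hq hmu
    simp only [Function.iterate_zero, id]
    apply stp_of_not
    · rintro ⟨s, hs1, hs2⟩
      have := hjn s
      unfold mu at hmu; omega
    · rintro ⟨s, hs1, hs2⟩
      have := him s
      unfold mu at hmu; omega
  | succ t ih =>
    intro q hq hmu
    by_cases h : stp i j q = q
    · rw [Function.iterate_fixed h]; exact h
    · rw [Function.iterate_succ_apply]
      exact ih _ (box_stp m n hjn him hq) (by have := mu_stp m n hjn him h; omega)

theorem le_F (p : ℕ × ℕ) : p ≤ F i j m n p := by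
  unfold F
  generalize m + n = t
  induction t with
  | zero => exact le_refl _
  | succ t ih => rw [Function.iterate_succ_apply']; exact le_trans ih (le_stp i j _)

theorem F_stp (hjn : ∀ s, j s ≤ n) (him : ∀ s, i s ≤ m) {p : ℕ × ℕ} (hp : box m n p) :
    F i j m n (stp i j p) = F i j m n p := by
  unfold F
  rw [← Function.iterate_succ_apply, Function.iterate_succ_apply']
  exact isFix_F m n hjn him hp

theorem stp_le_fix {p w : ℕ × ℕ} (hpw : p ≤ w) (hw : stp i j w = w) : stp i j p ≤ w := by
  by_cases hc : colC i j p
  · obtain ⟨s, hs1, hs2⟩ := hc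
    rw [stp_of_col i j ⟨s, hs1, hs2⟩]
    rcases Nat.lt_or_ge p.2 w.2 with h | h
    · exact ⟨hpw.1, h⟩
    · have h2 : p.2 = w.2 := le_antisymm hpw.2 h
      exact absurd hw.symm (by
        have : colC i j w := ⟨s, h2 ▸ hs1, le_trans hs2 hpw.1⟩
        rw [stp_of_col i j this]
        intro hh; exact absurd (congrArg Prod.snd hh) (by simp))
  by_cases hr : rowC i j p
  · obtain ⟨s, hs1, hs2⟩ := hr
    rw [stp_of_row i j hc ⟨s, hs1, hs2⟩]
    rcases Nat.lt_or_ge p.1 w.1 with h | h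
    · exact ⟨h, hpw.2⟩
    · have h2 : p.1 = w.1 := le_antisymm hpw.1 h
      exact absurd (fix_not_row i j hw) (by
        exact not_not_intro ⟨s, h2 ▸ hs1, le_trans hs2 hpw.2⟩)
  · rw [stp_of_not i j hc hr]; exact hpw

theorem F_le_fix {p w : ℕ × ℕ} (hpw : p ≤ w) (hw : stp i j w = w) : F i j m n p ≤ w := by
  unfold F
  generalize m + n = t
  induction t with
  | zero => exact hpw
  | succ t ih => rw [Function.iterate_succ_apply']; exact stp_le_fix ih hw

theorem F_mono (hjn : ∀ s, j s ≤ n) (him : ∀ s, i s ≤ m) {p q : ℕ × ℕ} (hq : box m n q)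
    (hpq : p ≤ q) : F i j m n p ≤ F i j m n q :=
  F_le_fix m n (le_trans hpq (le_F m n q)) (isFix_F m n hjn him hq)

theorem F_idem (hjn : ∀ s, j s ≤ n) (him : ∀ s, i s ≤ m) {p : ℕ × ℕ} (hp : box m n p) :
    F i j m n (F i j m n p) = F i j m n p :=
  Function.iterate_fixed (isFix_F m n hjn him hp) _

theorem box_F (hjn : ∀ s, j s ≤ n) (him : ∀ s, i s ≤ m) {p : ℕ × ℕ} (hp : box m n p) :
    box m n (F i j m n p) := by
  unfold F
  generalize m + n = t
  induction t with
  | zero => exact hp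
  | succ t ih => rw [Function.iterate_succ_apply']; exact box_stp m n hjn him ih

theorem F_colmove (hjn : ∀ s, j s ≤ n) (him : ∀ s, i s ≤ m) {p : ℕ × ℕ} (hp : box m n p)
    (hc : colC i j p) : F i j m n (p.1, p.2 + 1) = F i j m n p := by
  rw [← stp_of_col i j hc]; exact F_stp m n hjn him hp

theorem F_rowmove (hjn : ∀ s, j s ≤ n) (him : ∀ s, i s ≤ m) {p : ℕ × ℕ} (hp : box m n p)
    (hr : rowC i j p) : F i j m n (p.1 + 1, p.2) = F i j m n p := by
  suffices H : ∀ t q, box m n q → mu m n q ≤ t → rowC i j q →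
      F i j m n (q.1 + 1, q.2) = F i j m n q by
    exact H (m+n) p hp (by unfold mu; omega) hr
  intro t
  induction t with
  | zero =>
    intro q hq hmu hrq
    obtain ⟨s, hs1, hs2⟩ := hrq
    have := hjn s; have := him s
    unfold mu at hmu; omega
  | succ t ih =>
    intro q hq hmu hrq
    by_cases hcq : colC i j q
    · obtain ⟨s, hs1, hs2⟩ := hcq
      have hstep : stp i j q = (q.1, q.2 + 1) := stp_of_col i j ⟨s, hs1, hs2⟩
      have hboxc : box m n (q.1, q.2 + 1) := hstep ▸ box_stp m n hjn him hq
      have hmuc : mu m n (q.1, q.2 + 1) ≤ t := by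
        have h2 : q.2 + 1 ≤ n := hs1 ▸ hjn s
        unfold mu at hmu ⊢; simp only at *; omega
      have hrowc : rowC i j ((q.1 : ℕ), q.2 + 1) := by
        obtain ⟨t', ht1, ht2⟩ := hrq
        exact ⟨t', ht1, Nat.le_succ_of_le ht2⟩
      have IH := ih (q.1, q.2 + 1) hboxc hmuc hrowc
      have hcol' : colC i j ((q.1 : ℕ) + 1, q.2) := ⟨s, hs1, Nat.le_succ_of_le hs2⟩
      have hbox' : box m n ((q.1 : ℕ) + 1, q.2) := by
        obtain ⟨t', ht1, ht2⟩ := hrq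
        exact ⟨ht1 ▸ him t', hq.2⟩
      calc F i j m n (q.1 + 1, q.2) = F i j m n ((q.1 + 1 : ℕ), q.2 + 1) := by
              rw [← F_colmove m n hjn him hbox' hcol']
         _ = F i j m n ((q.1 : ℕ), q.2 + 1) := IH
         _ = F i j m n q := F_colmove m n hjn him hq ⟨s, hs1, hs2⟩
    · rw [← stp_of_row i j hcq hrq]; exact F_stp m n hjn him hq

theorem F_sup_stp (hjn : ∀ s, j s ≤ n) (him : ∀ s, i s ≤ m) {p : ℕ × ℕ} (c : ℕ × ℕ)
    (hp : box m n p) (hc : box m n c) :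
    F i j m n (stp i j p ⊔ c) = F i j m n (p ⊔ c) := by
  have hsupbox : box m n (p ⊔ c) := ⟨sup_le hp.1 hc.1, sup_le hp.2 hc.2⟩
  by_cases hcol : colC i j p
  · obtain ⟨s, hs1, hs2⟩ := hcol
    rw [stp_of_col i j ⟨s, hs1, hs2⟩]
    rcases Nat.lt_or_ge p.2 c.2 with h | h
    · have : (((p.1 : ℕ), p.2 + 1) : ℕ × ℕ) ⊔ c = p ⊔ c := by
        have : max (p.2 + 1) c.2 = max p.2 c.2 := by omega
        simp [Prod.ext_iff, sup_eq_max, this]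
      rw [this]
    · have h2 : max p.2 c.2 = p.2 := max_eq_left h
      have hcolsup : colC i j (p ⊔ c) := ⟨s, by rw [sup_eq_max] at *; simp [Prod.ext_iff] at *; omega,
        le_trans hs2 (le_max_left _ _)⟩
      have := F_colmove m n hjn him hsupbox hcolsup
      have heq : (((p.1 : ℕ), p.2 + 1) : ℕ × ℕ) ⊔ c = ((p ⊔ c).1, (p ⊔ c).2 + 1) := by
        simp [Prod.ext_iff, sup_eq_max]; omega
      rw [heq, this]
  by_cases hrow : rowC i j p
  · obtain ⟨s, hs1, hs2⟩ := hrow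
    rw [stp_of_row i j hcol ⟨s, hs1, hs2⟩]
    rcases Nat.lt_or_ge p.1 c.1 with h | h
    · have : (((p.1 : ℕ) + 1, p.2) : ℕ × ℕ) ⊔ c = p ⊔ c := by
        have : max (p.1 + 1) c.1 = max p.1 c.1 := by omega
        simp [Prod.ext_iff, sup_eq_max, this]
      rw [this]
    · have hrowsup : rowC i j (p ⊔ c) := ⟨s, by simp [sup_eq_max]; omega,
        le_trans hs2 (le_max_left _ _)⟩
      have := F_rowmove m n hjn him hsupbox hrowsup
      have heq : (((p.1 : ℕ) + 1, p.2) : ℕ × ℕ) ⊔ c = ((p ⊔ c).1 + 1, (p ⊔ c).2) := by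
        simp [Prod.ext_iff, sup_eq_max]; omega
      rw [heq, this]
  · rw [stp_of_not i j hcol hrow]

theorem F_sup_F (hjn : ∀ s, j s ≤ n) (him : ∀ s, i s ≤ m) {p : ℕ × ℕ} (c : ℕ × ℕ)
    (hp : box m n p) (hc : box m n c) :
    F i j m n (F i j m n p ⊔ c) = F i j m n (p ⊔ c) := by
  have hbox : ∀ t : ℕ, box m n ((stp i j)^[t] p) := by
    intro t
    induction t with
    | zero => exact hp
    | succ t ih => rw [Function.iterate_succ_apply']; exact box_stp m n hjn him ih
  have H : ∀ t : ℕ, F i j m n ((stp i j)^[t] p ⊔ c) = F i j m n (p ⊔ c) := by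
    intro t
    induction t with
    | zero => rfl
    | succ t ih =>
      rw [Function.iterate_succ_apply', F_sup_stp m n hjn him c (hbox t) hc, ih]
  exact H (m + n)


theorem no_col_run (hjn : ∀ s, j s ≤ n) (him : ∀ s, i s ≤ m) (hiinj : Function.Injective i)
    {x q : ℕ} (hx : x ≤ m) (hq : q ≤ n)
    (hinv : ∀ s, j s = q + 1 → ¬ i s ≤ x) : (F i j m n (x, q)).2 = q := by
  suffices H : ∀ t x, x ≤ m → m - x ≤ t → (∀ s, j s = q + 1 → ¬ i s ≤ x) →
      (F i j m n (x, q)).2 = q by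
    exact H m x hx (by omega) hinv
  intro t
  induction t with
  | zero =>
    intro x hx hmx hinv
    have hnocol : ¬ colC i j ((x : ℕ), q) := by
      rintro ⟨s, hs1, hs2⟩; exact hinv s hs1 hs2
    have hnorow : ¬ rowC i j ((x : ℕ), q) := by
      rintro ⟨s, hs1, hs2⟩
      have := him s; omega
    unfold F
    rw [Function.iterate_fixed (stp_of_not i j hnocol hnorow)]
  | succ t ih =>
    intro x hx hmx hinv
    have hnocol : ¬ colC i j ((x : ℕ), q) := by
      rintro ⟨s, hs1, hs2⟩; exact hinv s hs1 hs2
    by_cases hrow : rowC i j ((x : ℕ), q)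
    · obtain ⟨s, hs1, hs2⟩ := hrow
      have hxm : x + 1 ≤ m := hs1 ▸ him s
      have hinv' : ∀ s', j s' = q + 1 → ¬ i s' ≤ x + 1 := by
        intro s' hj' hle'
        rcases Nat.lt_or_ge x (i s') with h | h
        · have : i s' = i s := by omega
          have : s' = s := hiinj this
          subst this
          simp only at hs2 hj'
          omega
        · exact hinv s' hj' h
      have := F_rowmove m n hjn him (p := ((x:ℕ), q)) ⟨hx, hq⟩ ⟨s, hs1, hs2⟩
      simp only at this
      rw [← this]
      exact ih (x+1) hxm (by omega) hinv'
    · unfold F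
      rw [Function.iterate_fixed (stp_of_not i j hnocol hrow)]

theorem no_row_run (hjn : ∀ s, j s ≤ n) (him : ∀ s, i s ≤ m) (hjinj : Function.Injective j)
    {p y : ℕ} (hp : p ≤ m) (hy : y ≤ n)
    (hinv : ∀ s, i s = p + 1 → ¬ j s ≤ y) : (F i j m n (p, y)).1 = p := by
  suffices H : ∀ t y, y ≤ n → n - y ≤ t → (∀ s, i s = p + 1 → ¬ j s ≤ y) →
      (F i j m n (p, y)).1 = p by
    exact H n y hy (by omega) hinv
  intro t
  induction t with
  | zero =>
    intro y hy hny hinv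
    have hnocol : ¬ colC i j ((p : ℕ), y) := by
      rintro ⟨s, hs1, hs2⟩
      have := hjn s; omega
    have hnorow : ¬ rowC i j ((p : ℕ), y) := by
      rintro ⟨s, hs1, hs2⟩; exact hinv s hs1 hs2
    unfold F
    rw [Function.iterate_fixed (stp_of_not i j hnocol hnorow)]
  | succ t ih =>
    intro y hy hny hinv
    have hnorow : ¬ rowC i j ((p : ℕ), y) := by
      rintro ⟨s, hs1, hs2⟩; exact hinv s hs1 hs2
    by_cases hcol : colC i j ((p : ℕ), y)
    · obtain ⟨s, hs1, hs2⟩ := hcol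
      have hyn : y + 1 ≤ n := hs1 ▸ hjn s
      have hinv' : ∀ s', i s' = p + 1 → ¬ j s' ≤ y + 1 := by
        intro s' hi' hle'
        rcases Nat.lt_or_ge y (j s') with h | h
        · have : j s' = j s := by omega
          have : s' = s := hjinj this
          subst this
          simp only at hs2 hi'
          omega
        · exact hinv s' hi' h
      have := F_colmove m n hjn him (p := ((p:ℕ), y)) ⟨hp, hy⟩ ⟨s, hs1, hs2⟩
      simp only at this
      rw [← this]
      exact ih (y+1) hyn (by omega) hinv'
    · unfold F
      rw [Function.iterate_fixed (stp_of_not i j hcol hnorow)]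

theorem cover_key_row (hjn : ∀ s, j s ≤ n) (him : ∀ s, i s ≤ m)
    (hiinj : Function.Injective i)
    {p q : ℕ} (hpm : p + 1 ≤ m) (hqn : q ≤ n)
    (hz : stp i j ((p : ℕ), q) = ((p : ℕ), q)) {w : ℕ × ℕ} (hw : stp i j w = w)
    (hzw : ((p : ℕ), q) ≤ w) (hwb : w ≤ F i j m n ((p : ℕ) + 1, q))
    (hne : w ≠ ((p : ℕ), q)) : w = F i j m n ((p : ℕ) + 1, q) := by
  rcases Nat.lt_or_ge p w.1 with h | h
  · have : (((p : ℕ) + 1, q) : ℕ × ℕ) ≤ w := ⟨h, hzw.2⟩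
    exact le_antisymm hwb (F_le_fix m n this hw)
  · have hw1 : w.1 = p := le_antisymm h hzw.1
    have hw2 : q + 1 ≤ w.2 := by
      rcases Nat.lt_or_ge q w.2 with h2 | h2
      · omega
      · exact absurd (Prod.ext hw1 (le_antisymm h2 hzw.2)) hne
    have hinv : ∀ s, j s = q + 1 → ¬ i s ≤ p + 1 := by
      intro s hjs hle
      rcases Nat.lt_or_ge p (i s) with h3 | h3
      · have : i s = p + 1 := by omega
        exact fix_not_row i j hw ⟨s, by omega, by omega⟩
      · exact fix_not_col i j hz ⟨s, hjs, h3⟩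
    have := no_col_run m n hjn him hiinj hpm hqn hinv
    have := hwb.2
    omega

theorem cover_key_col (hjn : ∀ s, j s ≤ n) (him : ∀ s, i s ≤ m)
    (hjinj : Function.Injective j)
    {p q : ℕ} (hpm : p ≤ m) (hqn : q + 1 ≤ n)
    (hz : stp i j ((p : ℕ), q) = ((p : ℕ), q)) {w : ℕ × ℕ} (hw : stp i j w = w)
    (hzw : ((p : ℕ), q) ≤ w) (hwb : w ≤ F i j m n ((p : ℕ), q + 1))
    (hne : w ≠ ((p : ℕ), q)) : w = F i j m n ((p : ℕ), q + 1) := by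
  rcases Nat.lt_or_ge q w.2 with h | h
  · have : (((p : ℕ), q + 1) : ℕ × ℕ) ≤ w := ⟨hzw.1, h⟩
    exact le_antisymm hwb (F_le_fix m n this hw)
  · have hw2 : w.2 = q := le_antisymm h hzw.2
    have hw1 : p + 1 ≤ w.1 := by
      rcases Nat.lt_or_ge p w.1 with h2 | h2
      · omega
      · exact absurd (Prod.ext (le_antisymm h2 hzw.1) hw2) hne
    have hinv : ∀ s, i s = p + 1 → ¬ j s ≤ q + 1 := by
      intro s his hle
      rcases Nat.lt_or_ge q (j s) with h3 | h3
      · have : j s = q + 1 := by omega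
        exact fix_not_col i j hw ⟨s, by omega, by omega⟩
      · exact fix_not_row i j hz ⟨s, his, h3⟩
    have := no_row_run m n hjn him hjinj hpm hqn hinv
    have := hwb.1
    omega


/-! Interface between `Grid m n` and `ℕ × ℕ`. -/

def emb {m n : ℕ} (a : Grid m n) : ℕ × ℕ := (a.1.val, a.2.val)

def unemb (m n : ℕ) (p : ℕ × ℕ) : Grid m n := ((p.1 : Fin (m + 1)), (p.2 : Fin (n + 1)))

theorem box_emb {m n : ℕ} (a : Grid m n) : box m n (emb a) :=
  ⟨Nat.lt_succ_iff.mp a.1.isLt, Nat.lt_succ_iff.mp a.2.isLt⟩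

theorem emb_unemb {m n : ℕ} {p : ℕ × ℕ} (hp : box m n p) : emb (unemb m n p) = p := by
  unfold emb unemb
  have h1 : p.1 % (m + 1) = p.1 := Nat.mod_eq_of_lt (Nat.lt_succ_of_le hp.1)
  have h2 : p.2 % (n + 1) = p.2 := Nat.mod_eq_of_lt (Nat.lt_succ_of_le hp.2)
  simp [h1, h2]

theorem unemb_emb {m n : ℕ} (a : Grid m n) : unemb m n (emb a) = a := by
  unfold emb unemb
  exact Prod.ext (Fin.cast_val_eq_self a.1) (Fin.cast_val_eq_self a.2)

theorem emb_sup {m n : ℕ} (a b : Grid m n) : emb (a ⊔ b) = emb a ⊔ emb b := rfl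

theorem emb_le_iff {m n : ℕ} {a b : Grid m n} : emb a ≤ emb b ↔ a ≤ b := Iff.rfl

theorem emb_inj {m n : ℕ} {a b : Grid m n} (h : emb a = emb b) : a = b := by
  have := unemb_emb a; have := unemb_emb b
  rw [← unemb_emb a, ← unemb_emb b, h]


/-! Identification of `β` with the kernel of `F`. -/

section Main

variable {m n k : ℕ} {i j : Fin k → ℕ}

theorem R_isJoinCong (hjn : ∀ s, j s ≤ n) (him : ∀ s, i s ≤ m) :
    IsJoinCong (fun a b : Grid m n => F i j m n (emb a) = F i j m n (emb b)) := by
  refine ⟨⟨fun _ => rfl, Eq.symm, Eq.trans⟩, fun a b c h => ?_⟩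
  simp only [emb_sup]
  rw [← F_sup_F m n hjn him (emb c) (box_emb a) (box_emb c), h,
    F_sup_F m n hjn him (emb c) (box_emb b) (box_emb c)]

theorem beta_le_R (hjn : ∀ s, j s ≤ n) (him : ∀ s, i s ≤ m)
    (hj1 : ∀ s, 1 ≤ j s) (hi1 : ∀ s, 1 ≤ i s) {a b : Grid m n}
    (h : joinCongSup (fun s : Fin k => cg m n (i s) (j s)) a b) :
    F i j m n (emb a) = F i j m n (emb b) := by
  refine gen_le (R_isJoinCong hjn him) ?_ h
  rintro x y ⟨s, hcg⟩
  refine gen_le (R_isJoinCong hjn him) ?_ hcg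
  rintro x' y' ⟨rfl, (rfl | rfl)⟩
  · have hI : ((i s : Fin (m + 1)) : ℕ) = i s :=
      Fin.val_cast_of_lt (Nat.lt_succ_of_le (him s))
    have hJ : ((j s : Fin (n + 1)) : ℕ) = j s :=
      Fin.val_cast_of_lt (Nat.lt_succ_of_le (hjn s))
    have hJ1 : (((j s - 1 : ℕ) : Fin (n + 1)) : ℕ) = j s - 1 :=
      Fin.val_cast_of_lt (Nat.lt_succ_of_le (le_trans (Nat.sub_le _ _) (hjn s)))
    show F i j m n _ = F i j m n _
    unfold emb
    simp only [hI, hJ, hJ1]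
    have hcol : colC i j ((i s : ℕ), j s - 1) := ⟨s, by have := hj1 s; omega, le_refl _⟩
    have hbox : box m n ((i s : ℕ), j s - 1) := ⟨him s, le_trans (Nat.sub_le _ _) (hjn s)⟩
    have := F_colmove m n hjn him hbox hcol
    simp only at this
    rw [show j s - 1 + 1 = j s by have := hj1 s; omega] at this
    exact this.symm
  · have hI : ((i s : Fin (m + 1)) : ℕ) = i s :=
      Fin.val_cast_of_lt (Nat.lt_succ_of_le (him s))
    have hJ : ((j s : Fin (n + 1)) : ℕ) = j s :=
      Fin.val_cast_of_lt (Nat.lt_succ_of_le (hjn s))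
    have hI1 : (((i s - 1 : ℕ) : Fin (m + 1)) : ℕ) = i s - 1 :=
      Fin.val_cast_of_lt (Nat.lt_succ_of_le (le_trans (Nat.sub_le _ _) (him s)))
    show F i j m n _ = F i j m n _
    unfold emb
    simp only [hI, hJ, hI1]
    have hrow : rowC i j ((i s - 1 : ℕ), j s) := ⟨s, by have := hi1 s; omega, le_refl _⟩
    have hncol : ¬ colC i j ((i s - 1 : ℕ), j s) ∨ True := Or.inr trivial
    have hbox : box m n ((i s - 1 : ℕ), j s) := ⟨le_trans (Nat.sub_le _ _) (him s), hjn s⟩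
    have := F_rowmove m n hjn him hbox hrow
    simp only at this
    rw [show i s - 1 + 1 = i s by have := hi1 s; omega] at this
    exact this.symm

theorem step_beta (hjn : ∀ s, j s ≤ n) (him : ∀ s, i s ≤ m)
    (hj1 : ∀ s, 1 ≤ j s) (hi1 : ∀ s, 1 ≤ i s) {p : ℕ × ℕ} (hp : box m n p) :
    joinCongSup (fun s : Fin k => cg m n (i s) (j s)) (unemb m n p) (unemb m n (stp i j p)) := by
  by_cases hcol : colC i j p
  · obtain ⟨s, hs1, hs2⟩ := hcol
    have hstp : stp i j p = (p.1, p.2 + 1) := stp_of_col i j ⟨s, hs1, hs2⟩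
    have hbox' : box m n (stp i j p) := box_stp m n hjn him hp
    have base : cg m n (i s) (j s)
        ((i s : Fin (m + 1)), ((j s - 1 : ℕ) : Fin (n + 1)))
        ((i s : Fin (m + 1)), (j s : Fin (n + 1))) :=
      le_gen _ ⟨rfl, Or.inl rfl⟩
    have hjoin := (isJoinCong_gen _).2 _ _ (unemb m n p) base
    have e1 : ((i s : Fin (m + 1)), ((j s - 1 : ℕ) : Fin (n + 1))) ⊔ unemb m n p
        = unemb m n p := by
      apply emb_inj
      rw [emb_sup, emb_unemb hp]
      have hb : box m n ((i s : ℕ), j s - 1) := ⟨him s, le_trans (Nat.sub_le _ _) (hjn s)⟩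
      have : emb ((i s : Fin (m + 1)), ((j s - 1 : ℕ) : Fin (n + 1))) = ((i s : ℕ), j s - 1) := by
        rw [show (((i s : Fin (m+1)), ((j s - 1 : ℕ) : Fin (n + 1))) : Grid m n)
            = unemb m n ((i s : ℕ), j s - 1) from rfl, emb_unemb hb]
      rw [this]
      have := hj1 s
      simp only [Prod.sup_def, sup_eq_max, Prod.ext_iff]
      constructor <;> omega
    have e2 : ((i s : Fin (m + 1)), (j s : Fin (n + 1))) ⊔ unemb m n p
        = unemb m n (stp i j p) := by
      apply emb_inj
      rw [emb_sup, emb_unemb hp, emb_unemb hbox', hstp]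
      have hb : box m n ((i s : ℕ), j s) := ⟨him s, hjn s⟩
      have : emb ((i s : Fin (m + 1)), (j s : Fin (n + 1))) = ((i s : ℕ), j s) := by
        rw [show (((i s : Fin (m+1)), (j s : Fin (n + 1))) : Grid m n)
            = unemb m n ((i s : ℕ), j s) from rfl, emb_unemb hb]
      rw [this]
      simp only [Prod.sup_def, sup_eq_max, Prod.ext_iff]
      constructor <;> omega
    rw [e1, e2] at hjoin
    exact le_gen _ ⟨s, hjoin⟩
  by_cases hrow : rowC i j p
  · obtain ⟨s, hs1, hs2⟩ := hrow
    have hstp : stp i j p = (p.1 + 1, p.2) := stp_of_row i j hcol ⟨s, hs1, hs2⟩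
    have hbox' : box m n (stp i j p) := box_stp m n hjn him hp
    have base : cg m n (i s) (j s)
        (((i s - 1 : ℕ) : Fin (m + 1)), (j s : Fin (n + 1)))
        ((i s : Fin (m + 1)), (j s : Fin (n + 1))) :=
      le_gen _ ⟨rfl, Or.inr rfl⟩
    have hjoin := (isJoinCong_gen _).2 _ _ (unemb m n p) base
    have e1 : (((i s - 1 : ℕ) : Fin (m + 1)), (j s : Fin (n + 1))) ⊔ unemb m n p
        = unemb m n p := by
      apply emb_inj
      rw [emb_sup, emb_unemb hp]
      have hb : box m n ((i s - 1 : ℕ), j s) := ⟨le_trans (Nat.sub_le _ _) (him s), hjn s⟩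
      have : emb ((((i s - 1 : ℕ)) : Fin (m + 1)), (j s : Fin (n + 1))) = ((i s - 1 : ℕ), j s) := by
        rw [show ((((i s - 1 : ℕ) : Fin (m+1)), (j s : Fin (n + 1))) : Grid m n)
            = unemb m n ((i s - 1 : ℕ), j s) from rfl, emb_unemb hb]
      rw [this]
      have := hi1 s
      simp only [Prod.sup_def, sup_eq_max, Prod.ext_iff]
      constructor <;> omega
    have e2 : ((i s : Fin (m + 1)), (j s : Fin (n + 1))) ⊔ unemb m n p
        = unemb m n (stp i j p) := by
      apply emb_inj
      rw [emb_sup, emb_unemb hp, emb_unemb hbox', hstp]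
      have hb : box m n ((i s : ℕ), j s) := ⟨him s, hjn s⟩
      have : emb ((i s : Fin (m + 1)), (j s : Fin (n + 1))) = ((i s : ℕ), j s) := by
        rw [show (((i s : Fin (m+1)), (j s : Fin (n + 1))) : Grid m n)
            = unemb m n ((i s : ℕ), j s) from rfl, emb_unemb hb]
      rw [this]
      simp only [Prod.sup_def, sup_eq_max, Prod.ext_iff]
      constructor <;> omega
    rw [e1, e2] at hjoin
    exact le_gen _ ⟨s, hjoin⟩
  · rw [stp_of_not i j hcol hrow]
    exact (isJoinCong_gen _).1.refl _

theorem R_le_beta (hjn : ∀ s, j s ≤ n) (him : ∀ s, i s ≤ m)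
    (hj1 : ∀ s, 1 ≤ j s) (hi1 : ∀ s, 1 ≤ i s) {a b : Grid m n}
    (h : F i j m n (emb a) = F i j m n (emb b)) :
    joinCongSup (fun s : Fin k => cg m n (i s) (j s)) a b := by
  set B := joinCongSup (fun s : Fin k => cg m n (i s) (j s)) with hB
  have hcong : IsJoinCong B := isJoinCong_gen _
  have key : ∀ p : ℕ × ℕ, box m n p → B (unemb m n p) (unemb m n (F i j m n p)) := by
    intro p hp
    have : ∀ t : ℕ, B (unemb m n p) (unemb m n ((stp i j)^[t] p)) := by
      intro t
      induction t with
      | zero => exact hcong.1.refl _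
      | succ t ih =>
        rw [Function.iterate_succ_apply']
        have hboxt : box m n ((stp i j)^[t] p) := by
          clear ih
          induction t with
          | zero => exact hp
          | succ t ih2 => rw [Function.iterate_succ_apply']; exact box_stp m n hjn him ih2
        exact hcong.1.trans ih (step_beta hjn him hj1 hi1 hboxt)
    exact this (m + n)
  have ha := key (emb a) (box_emb a)
  have hb := key (emb b) (box_emb b)
  rw [unemb_emb] at ha hb
  rw [h] at ha
  exact hcong.1.trans ha (hcong.1.symm hb)

end Main

end CPaux

/-- The main theorem. -/
theorem main_thm (m n k : ℕ) (hm : 1 ≤ m) (hn : 1 ≤ n) (hk : 1 ≤ k)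
    (i j : Fin k → ℕ)
    (hmono : StrictMono i) (hi1 : ∀ s, 1 ≤ i s) (him : ∀ s, i s ≤ m)
    (hjinj : Function.Injective j) (hj1 : ∀ s, 1 ≤ j s) (hjn : ∀ s, j s ≤ n)
    (β : Grid m n → Grid m n → Prop)
    (hβ : β = joinCongSup fun s : Fin k => cg m n (i s) (j s)) :
    Equivalence β ∧
    ∃ P : PartialOrder (Quot β),
      (∀ a b : Grid m n, P.le (Quot.mk β a) (Quot.mk β b) ↔ β (a ⊔ b) b) ∧
      ∀ a b : Grid m n, a ⋖ b →
        Quot.mk β a = Quot.mk β b ∨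
          @CovBy _ P.toLT (Quot.mk β a) (Quot.mk β b) := by
  have hiinj : Function.Injective i := hmono.injective
  have hcong : IsJoinCong β := by rw [hβ]; exact CPaux.isJoinCong_gen _
  set Fe : Grid m n → ℕ × ℕ := fun a => CPaux.F i j m n (CPaux.emb a) with hFe
  have hβR : ∀ {a b : Grid m n}, β a b → Fe a = Fe b := by
    intro a b h; rw [hβ] at h; exact CPaux.beta_le_R hjn him hj1 hi1 h
  have hRβ : ∀ {a b : Grid m n}, Fe a = Fe b → β a b := by
    intro a b h; rw [hβ]; exact CPaux.R_le_beta hjn him hj1 hi1 h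
  have hfix : ∀ a : Grid m n, CPaux.stp i j (Fe a) = Fe a :=
    fun a => CPaux.isFix_F m n hjn him (CPaux.box_emb a)
  have hboxF : ∀ a : Grid m n, CPaux.box m n (Fe a) :=
    fun a => CPaux.box_F m n hjn him (CPaux.box_emb a)
  have hFmono : ∀ {a b : Grid m n}, a ≤ b → Fe a ≤ Fe b :=
    fun {a b} h => CPaux.F_mono m n hjn him (CPaux.box_emb b) (CPaux.emb_le_iff.mpr h)
  have hleF : ∀ a : Grid m n, CPaux.emb a ≤ Fe a := fun a => CPaux.le_F m n (CPaux.emb a)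
  have horder : ∀ a b : Grid m n, β (a ⊔ b) b ↔ Fe a ≤ Fe b := by
    intro a b
    constructor
    · intro h
      have h2 := hβR h
      calc Fe a ≤ Fe (a ⊔ b) := hFmono le_sup_left
        _ = Fe b := h2
    · intro h
      apply hRβ
      show CPaux.F i j m n (CPaux.emb (a ⊔ b)) = CPaux.F i j m n (CPaux.emb b)
      rw [CPaux.emb_sup,
        ← CPaux.F_sup_F m n hjn him (CPaux.emb b) (CPaux.box_emb a) (CPaux.box_emb b)]
      apply le_antisymm
      · calc CPaux.F i j m n (CPaux.F i j m n (CPaux.emb a) ⊔ CPaux.emb b)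
            ≤ CPaux.F i j m n (CPaux.F i j m n (CPaux.emb b)) :=
              CPaux.F_mono m n hjn him (hboxF b) (sup_le h (hleF b))
          _ = CPaux.F i j m n (CPaux.emb b) := CPaux.F_idem m n hjn him (CPaux.box_emb b)
      · refine CPaux.F_mono m n hjn him ?_ le_sup_right
        exact ⟨sup_le (hboxF a).1 (CPaux.box_emb b).1, sup_le (hboxF a).2 (CPaux.box_emb b).2⟩
  let le : Quot β → Quot β → Prop := fun q₁ q₂ =>
    Quot.liftOn₂ q₁ q₂ (fun a b => Fe a ≤ Fe b)
      (fun a b₁ b₂ h => by rw [hβR h])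
      (fun a₁ a₂ b h => by rw [hβR h])
  have hle_mk : ∀ a b : Grid m n, le (Quot.mk β a) (Quot.mk β b) ↔ Fe a ≤ Fe b :=
    fun a b => Iff.rfl
  let P : PartialOrder (Quot β) :=
    { le := le
      lt := fun x y => le x y ∧ ¬ le y x
      le_refl := fun q => by
        induction q using Quot.ind with | _ a =>
        exact le_refl (Fe a)
      le_trans := fun x y z => by
        induction x using Quot.ind with | _ a =>
        induction y using Quot.ind with | _ b =>
        induction z using Quot.ind with | _ c =>
        intro h1 h2
        exact le_trans (show Fe a ≤ Fe b from h1) (show Fe b ≤ Fe c from h2)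
      lt_iff_le_not_ge := fun _ _ => Iff.rfl
      le_antisymm := fun x y => by
        induction x using Quot.ind with | _ a =>
        induction y using Quot.ind with | _ b =>
        exact fun h1 h2 => Quot.sound (hRβ (le_antisymm h1 h2)) }
  refine ⟨hcong.1, P, fun a b => (horder a b).symm, ?_⟩
  intro a b hab
  by_cases hβab : β a b
  · exact Or.inl (Quot.sound hβab)
  right
  have hle : a ≤ b := hab.le
  have hne : Fe a ≠ Fe b := fun h => hβab (hRβ h)
  have hltP : P.lt (Quot.mk β a) (Quot.mk β b) :=
    ⟨hFmono hle, fun h => hne (le_antisymm (hFmono hle) h)⟩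
  obtain ⟨a1, a2⟩ := a
  obtain ⟨b1, b2⟩ := b
  rw [Prod.mk_covBy_mk_iff] at hab
  have hsup : CPaux.emb ((a1, a2) : Grid m n) ⊔ CPaux.emb ((b1, b2) : Grid m n)
      = CPaux.emb ((b1, b2) : Grid m n) := sup_eq_right.mpr (CPaux.emb_le_iff.mpr hle)
  rcases hab with ⟨h1, h2⟩ | ⟨h1, h2⟩
  · -- x-direction cover
    have hv : (a1 : ℕ) + 1 = (b1 : ℕ) := (Nat.covBy_iff_add_one_eq).mp (Fin.coe_covBy_iff.mpr h1)
    have hv2 : (a2 : ℕ) = (b2 : ℕ) := congrArg Fin.val h2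
    set z := Fe ((a1, a2) : Grid m n) with hz
    have hzge : CPaux.emb ((a1, a2) : Grid m n) ≤ z := hleF _
    have hz1 : z.1 = (a1 : ℕ) := by
      by_contra hc
      have hz1' : (a1 : ℕ) + 1 ≤ z.1 := by
        have := hzge.1; simp only [CPaux.emb] at this; omega
      have hble : CPaux.emb ((b1, b2) : Grid m n) ≤ z := by
        refine ⟨?_, ?_⟩
        · show (b1 : ℕ) ≤ z.1; omega
        · show (b2 : ℕ) ≤ z.2
          have := hzge.2; simp only [CPaux.emb] at this; omega
      have hFb_le : Fe ((b1, b2) : Grid m n) ≤ z :=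
        CPaux.F_le_fix m n hble (hfix _)
      exact hne (le_antisymm (hFmono hle) hFb_le)
    have hFb : Fe ((b1, b2) : Grid m n) = CPaux.F i j m n (z.1 + 1, z.2) := by
      have e1 : z ⊔ CPaux.emb ((b1, b2) : Grid m n) = (z.1 + 1, z.2) := by
        have hz2 : (a2 : ℕ) ≤ z.2 := hzge.2
        show (max z.1 (b1 : ℕ), max z.2 (b2 : ℕ)) = (z.1 + 1, z.2)
        rw [Prod.ext_iff]
        constructor <;> simp only <;> omega
      calc Fe ((b1, b2) : Grid m n)
          = CPaux.F i j m n (CPaux.emb ((a1, a2) : Grid m n)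
              ⊔ CPaux.emb ((b1, b2) : Grid m n)) := by rw [hsup]
        _ = CPaux.F i j m n (z ⊔ CPaux.emb ((b1, b2) : Grid m n)) :=
            (CPaux.F_sup_F m n hjn him _ (CPaux.box_emb _) (CPaux.box_emb _)).symm
        _ = CPaux.F i j m n (z.1 + 1, z.2) := by rw [e1]
    refine ⟨hltP, ?_⟩
    intro c hc1 hc2
    induction c using Quot.ind with | _ c =>
    have hw := CPaux.cover_key_row m n hjn him hiinj
      (p := z.1) (q := z.2)
      (by rw [hz1]; have : (b1 : ℕ) ≤ m := Nat.lt_succ_iff.mp b1.isLt; omega)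
      ((hboxF _).2)
      (hfix ((a1, a2) : Grid m n))
      (hfix c)
      hc1.1
      (by rw [← hFb]; exact hc2.1)
      (fun h => hc1.2 (le_of_eq (show Fe c = z from h)))
    exact hc2.2 (le_of_eq (by rw [hFb, hw]))
  · -- y-direction cover
    have hv : (a2 : ℕ) + 1 = (b2 : ℕ) := (Nat.covBy_iff_add_one_eq).mp (Fin.coe_covBy_iff.mpr h1)
    have hv2 : (a1 : ℕ) = (b1 : ℕ) := congrArg Fin.val h2
    set z := Fe ((a1, a2) : Grid m n) with hz
    have hzge : CPaux.emb ((a1, a2) : Grid m n) ≤ z := hleF _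
    have hz2 : z.2 = (a2 : ℕ) := by
      by_contra hc
      have hz2' : (a2 : ℕ) + 1 ≤ z.2 := by
        have := hzge.2; simp only [CPaux.emb] at this; omega
      have hble : CPaux.emb ((b1, b2) : Grid m n) ≤ z := by
        refine ⟨?_, ?_⟩
        · show (b1 : ℕ) ≤ z.1
          have := hzge.1; simp only [CPaux.emb] at this; omega
        · show (b2 : ℕ) ≤ z.2; omega
      have hFb_le : Fe ((b1, b2) : Grid m n) ≤ z :=
        CPaux.F_le_fix m n hble (hfix _)
      exact hne (le_antisymm (hFmono hle) hFb_le)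
    have hFb : Fe ((b1, b2) : Grid m n) = CPaux.F i j m n (z.1, z.2 + 1) := by
      have e1 : z ⊔ CPaux.emb ((b1, b2) : Grid m n) = (z.1, z.2 + 1) := by
        have hz1 : (a1 : ℕ) ≤ z.1 := hzge.1
        show (max z.1 (b1 : ℕ), max z.2 (b2 : ℕ)) = (z.1, z.2 + 1)
        rw [Prod.ext_iff]
        constructor <;> simp only <;> omega
      calc Fe ((b1, b2) : Grid m n)
          = CPaux.F i j m n (CPaux.emb ((a1, a2) : Grid m n)
              ⊔ CPaux.emb ((b1, b2) : Grid m n)) := by rw [hsup]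
        _ = CPaux.F i j m n (z ⊔ CPaux.emb ((b1, b2) : Grid m n)) :=
            (CPaux.F_sup_F m n hjn him _ (CPaux.box_emb _) (CPaux.box_emb _)).symm
        _ = CPaux.F i j m n (z.1, z.2 + 1) := by rw [e1]
    refine ⟨hltP, ?_⟩
    intro c hc1 hc2
    induction c using Quot.ind with | _ c =>
    have hw := CPaux.cover_key_col m n hjn him hjinj
      (p := z.1) (q := z.2)
      ((hboxF _).1)
      (by rw [hz2]; have : (b2 : ℕ) ≤ n := Nat.lt_succ_iff.mp b2.isLt; omega)
      (hfix ((a1, a2) : Grid m n))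
      (hfix c)
      hc1.1
      (by rw [← hFb]; exact hc2.1)
      (fun h => hc1.2 (le_of_eq (show Fe c = z from h)))
    exact hc2.2 (le_of_eq (by rw [hFb, hw]))

/-- The join `β` of the join-congruences `cg(i_s, j_s)` of the grid `K_{m,n}`
(`1 ≤ i_1 < ⋯ < i_k ≤ m`, `j_1,…,j_k` pairwise distinct in `{1,…,n}`) is
cover-preserving: `β` is an equivalence relation, the relation
`[a] ≤ [b] ↔ β (a ⊔ b) b` is a well-defined partial order on the quotient, and whenever
`a ⋖ b` in `K_{m,n}`, either `[a] = [b]` or `[a] ⋖ [b]` in the quotient. -/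
theorem joinCongSup_cover_preserving (m n k : ℕ) (hm : 1 ≤ m) (hn : 1 ≤ n) (hk : 1 ≤ k)
    (i j : Fin k → ℕ)
    (hmono : StrictMono i) (hi1 : ∀ s, 1 ≤ i s) (him : ∀ s, i s ≤ m)
    (hjinj : Function.Injective j) (hj1 : ∀ s, 1 ≤ j s) (hjn : ∀ s, j s ≤ n)
    (β : Grid m n → Grid m n → Prop)
    (hβ : β = joinCongSup fun s : Fin k => cg m n (i s) (j s)) :
    Equivalence β ∧
    ∃ P : PartialOrder (Quot β),
      (∀ a b : Grid m n, P.le (Quot.mk β a) (Quot.mk β b) ↔ β (a ⊔ b) b) ∧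
      ∀ a b : Grid m n, a ⋖ b →
        Quot.mk β a = Quot.mk β b ∨
          @CovBy _ P.toLT (Quot.mk β a) (Quot.mk β b) := by
  exact main_thm m n k hm hn hk i j hmono hi1 him hjinj hj1 hjn β hβ
end

section
/- Let S be a join-semilattice, let (β_i)_{i ∈ I} be a family of join-congruences of S, and let β be their join, i.e., the smallest join-congruence of S containing every β_i. Then for u, v ∈ S, the pair (u,v) belongs to β if and only if there exist k ∈ ℕ and elements u = z_0 ≤ z_1 ≤ ⋯ ≤ z_k = w_k ≥ w_{k−1} ≥ ⋯ ≥ w_0 = v of S such that for every j ∈ {1,…,k}, both (z_{j−1}, z_j) and (w_{j−1}, w_j) belong to ⋃_{i ∈ I} β_i. -/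
section ZigAux

variable {α : Type*} [SemilatticeSup α] {ι : Sort*}

/-- The zigzag relation used to describe the join of join-congruences. -/
def Zig (f : ι → α → α → Prop) (u v : α) : Prop :=
  ∃ (k : ℕ) (z w : ℕ → α),
    z 0 = u ∧ w 0 = v ∧ z k = w k ∧
    (∀ j < k, z j ≤ z (j + 1)) ∧ (∀ j < k, w j ≤ w (j + 1)) ∧
    (∀ j < k, (∃ i, f i (z j) (z (j + 1))) ∧ ∃ i, f i (w j) (w (j + 1)))

lemma chain_le (z : ℕ → α) : ∀ k, (∀ j < k, z j ≤ z (j + 1)) → z 0 ≤ z k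
  | 0, _ => le_refl _
  | k + 1, h =>
      (chain_le z k fun j hj => h j (hj.trans (Nat.lt_succ_self k))).trans
        (h k (Nat.lt_succ_self k))

lemma chain_rel {r : α → α → Prop} (hr : Equivalence r) (z : ℕ → α) :
    ∀ k, (∀ j < k, r (z j) (z (j + 1))) → r (z 0) (z k)
  | 0, _ => hr.refl _
  | k + 1, h =>
      hr.trans (chain_rel hr z k fun j hj => h j (hj.trans (Nat.lt_succ_self k)))
        (h k (Nat.lt_succ_self k))

lemma zig_of_f (f : ι → α → α → Prop) (hf : ∀ i, IsJoinCong (f i)) {i : ι} {a b : α}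
    (h : f i a b) : Zig f a b := by
  refine ⟨1, fun j => if j = 0 then a else a ⊔ b, fun j => if j = 0 then b else a ⊔ b,
    rfl, rfl, rfl, ?_, ?_, ?_⟩
  · intro j hj
    interval_cases j
    simp
  · intro j hj
    interval_cases j
    simp
  · intro j hj
    interval_cases j
    refine ⟨⟨i, ?_⟩, ⟨i, ?_⟩⟩
    · simpa [sup_comm] using (hf i).2 a b a h
    · simpa [sup_comm] using (hf i).2 b a b ((hf i).1.symm h)

lemma glue_chain (f : ι → α → α → Prop) (hf : ∀ i, IsJoinCong (f i))
    (k k' : ℕ) (z z' : ℕ → α) (hle : z' 0 ≤ z k)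
    (hm : ∀ j < k, z j ≤ z (j + 1)) (hm' : ∀ j < k', z' j ≤ z' (j + 1))
    (hs : ∀ j < k, ∃ i, f i (z j) (z (j + 1)))
    (hs' : ∀ j < k', ∃ i, f i (z' j) (z' (j + 1))) :
    ∃ Z : ℕ → α, Z 0 = z 0 ∧ Z (k + k') = z k ⊔ z' k' ∧
      (∀ j < k + k', Z j ≤ Z (j + 1)) ∧ (∀ j < k + k', ∃ i, f i (Z j) (Z (j + 1))) := by
  set Z : ℕ → α := fun j => if j ≤ k then z j else z k ⊔ z' (j - k) with hZ
  have key : ∀ j, k ≤ j → Z j = z k ⊔ z' (j - k) := by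
    intro j hj
    rcases eq_or_lt_of_le hj with h | h
    · subst h
      simp only [Z, le_refl, if_pos, Nat.sub_self]
      exact (sup_eq_left.mpr hle).symm
    · simp [Z, Nat.not_le.mpr h]
  refine ⟨Z, by simp [Z], ?_, ?_, ?_⟩
  · rw [key _ (Nat.le_add_right _ _), Nat.add_sub_cancel_left]
  · intro j hj
    rcases Nat.lt_or_ge j k with h | h
    · simp only [Z, if_pos h.le, if_pos (show j + 1 ≤ k from h)]
      exact hm j h
    · rw [key j h, key (j + 1) (h.trans (Nat.le_succ j)),
        show j + 1 - k = (j - k) + 1 by omega]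
      exact sup_le_sup_left (hm' (j - k) (by omega)) _
  · intro j hj
    rcases Nat.lt_or_ge j k with h | h
    · simp only [Z, if_pos h.le, if_pos (show j + 1 ≤ k from h)]
      exact hs j h
    · rw [key j h, key (j + 1) (h.trans (Nat.le_succ j)),
        show j + 1 - k = (j - k) + 1 by omega]
      obtain ⟨i, hi⟩ := hs' (j - k) (by omega)
      exact ⟨i, by simpa [sup_comm] using (hf i).2 _ _ (z k) hi⟩

lemma zig_isJoinCong (f : ι → α → α → Prop) (hf : ∀ i, IsJoinCong (f i)) :
    IsJoinCong (Zig f) := by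
  constructor
  · constructor
    · intro a
      exact ⟨0, fun _ => a, fun _ => a, rfl, rfl, rfl, by omega, by omega, by omega⟩
    · rintro a b ⟨k, z, w, hz0, hw0, hzw, hzm, hwm, hstep⟩
      exact ⟨k, w, z, hw0, hz0, hzw.symm, hwm, hzm, fun j hj => ⟨(hstep j hj).2, (hstep j hj).1⟩⟩
    · rintro a b c ⟨k, z, w, hz0, hw0, hzw, hzm, hwm, hstep⟩
        ⟨k', z', w', hz0', hw0', hzw', hzm', hwm', hstep'⟩
      obtain ⟨Z, hZ0, hZe, hZm, hZs⟩ :=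
        glue_chain f hf k k' z z'
          (by rw [hz0', hzw, ← hw0]; exact chain_le w k hwm) hzm hzm'
          (fun j hj => (hstep j hj).1) (fun j hj => (hstep' j hj).1)
      obtain ⟨W, hW0, hWe, hWm, hWs⟩ :=
        glue_chain f hf k' k w' w
          (by rw [hw0, ← hz0', ← hzw']; exact chain_le z' k' hzm') hwm' hwm
          (fun j hj => (hstep' j hj).2) (fun j hj => (hstep j hj).2)
      refine ⟨k + k', Z, W, hZ0.trans hz0, hW0.trans hw0', ?_,
        hZm, fun j hj => hWm j (by omega), fun j hj => ⟨hZs j hj, hWs j (by omega)⟩⟩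
      rw [hZe, Nat.add_comm k k', hWe, hzw, hzw', sup_comm]
  · rintro a b c ⟨k, z, w, hz0, hw0, hzw, hzm, hwm, hstep⟩
    refine ⟨k, fun j => z j ⊔ c, fun j => w j ⊔ c, by simp [hz0], by simp [hw0], by simp [hzw],
      fun j hj => sup_le_sup_right (hzm j hj) c, fun j hj => sup_le_sup_right (hwm j hj) c,
      fun j hj => ?_⟩
    obtain ⟨⟨i1, h1⟩, ⟨i2, h2⟩⟩ := hstep j hj
    exact ⟨⟨i1, (hf i1).2 _ _ c h1⟩, ⟨i2, (hf i2).2 _ _ c h2⟩⟩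

end ZigAux

/-- Description of the join of a family of join-congruences of a join-semilattice:
`(u,v)` belongs to the join iff there are `k ∈ ℕ` and elements
`u = z_0 ≤ z_1 ≤ ⋯ ≤ z_k = w_k ≥ w_{k−1} ≥ ⋯ ≥ w_0 = v` such that each pair
`(z_{j−1}, z_j)` and `(w_{j−1}, w_j)` belongs to some member of the family. -/
theorem joinCongSup_iff_zigzag {α : Type*} [SemilatticeSup α] {ι : Sort*}
    (f : ι → α → α → Prop) (hf : ∀ i, IsJoinCong (f i)) (u v : α) :
    joinCongSup f u v ↔
      ∃ (k : ℕ) (z w : ℕ → α),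
        z 0 = u ∧ w 0 = v ∧ z k = w k ∧
        (∀ j < k, z j ≤ z (j + 1)) ∧ (∀ j < k, w j ≤ w (j + 1)) ∧
        (∀ j < k, (∃ i, f i (z j) (z (j + 1))) ∧ ∃ i, f i (w j) (w (j + 1))) := by
  constructor
  · intro h
    exact h (Zig f) (zig_isJoinCong f hf) (fun x y hxy => hxy.elim fun i hi => zig_of_f f hf hi)
  · rintro ⟨k, z, w, hz0, hw0, hzw, hzm, hwm, hstep⟩ r hr hR
    have hz : r (z 0) (z k) := chain_rel hr.1 z k fun j hj =>
      (hstep j hj).1.elim fun i hi => hR _ _ ⟨i, hi⟩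
    have hw : r (w 0) (w k) := chain_rel hr.1 w k fun j hj =>
      (hstep j hj).2.elim fun i hi => hR _ _ ⟨i, hi⟩
    rw [hz0, hzw] at hz
    rw [hw0] at hw
    exact hr.1.trans hz (hr.1.symm hw)
end
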